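/- arXiv:2411.18780 — 8 statements merged into one kernel-verified Lean document; each statement's English description precedes it below -/
import Mathlib

section
/- Let R be a commutative ring and let P₁, P₂, Z ∈ R. For every natural number n, Σ_{k=0}^{n} (n choose k) · (∏_{i=0}^{k−1}(P₁ + i·Z)) · (∏_{j=0}^{n−k−1}(P₂ + j·Z)) = ∏_{i=0}^{n−1}(P₁ + P₂ + i·Z). -/
/-- The `Z`-homogeneous Chu–Vandermonde identity for rising factorials with step `Z`:
`∑ k, C(n,k) · P₁^{(k,Z)} · P₂^{(n−k,Z)} = (P₁+P₂)^{(n,Z)}`, where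
`x^{(n,Z)} = ∏_{i=0}^{n−1} (x + i·Z)`. -/
theorem rising_factorial_chu_vandermonde {R : Type*} [CommRing R] (P₁ P₂ Z : R) (n : ℕ) :
    ∑ k ∈ Finset.range (n + 1),
      (n.choose k : R) * (∏ i ∈ Finset.range k, (P₁ + (i : R) * Z)) *
        (∏ j ∈ Finset.range (n - k), (P₂ + (j : R) * Z)) =
      ∏ i ∈ Finset.range n, (P₁ + P₂ + (i : R) * Z) := by
  set r₁ : ℕ → R := fun k => ∏ i ∈ Finset.range k, (P₁ + (i : R) * Z) with hr₁
  set r₂ : ℕ → R := fun k => ∏ j ∈ Finset.range k, (P₂ + (j : R) * Z) with hr₂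
  induction n with
  | zero => simp [hr₁, hr₂]
  | succ n ih =>
    rw [Finset.prod_range_succ, ← ih]
    -- peel off k = 0
    rw [Finset.sum_range_succ']
    have hA : ∀ k ∈ Finset.range (n + 1),
        ((n+1).choose (k+1) : R) * r₁ (k+1) * r₂ (n + 1 - (k+1)) =
        (n.choose k : R) * (r₁ k * (P₁ + (k:R) * Z) * r₂ (n - k)) +
        (n.choose (k+1) : R) * r₁ (k+1) * r₂ (n - k) := by
      intro k hk
      have : r₁ (k+1) = r₁ k * (P₁ + (k:R)*Z) := Finset.prod_range_succ _ _
      rw [Nat.succ_sub_succ, Nat.choose_succ_succ, this]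
      push_cast
      ring
    rw [Finset.sum_congr rfl hA, Finset.sum_add_distrib]
    have hB : ∑ k ∈ Finset.range (n + 1), (n.choose (k+1) : R) * r₁ (k+1) * r₂ (n - k)
        + ((n+1).choose 0 : R) * r₁ 0 * r₂ (n + 1 - 0) =
        ∑ k ∈ Finset.range (n + 1), (n.choose k : R) * r₁ k * r₂ (n + 1 - k) := by
      rw [Finset.sum_range_succ (fun k => (n.choose (k+1) : R) * r₁ (k+1) * r₂ (n - k)) n,
        Nat.choose_succ_self, Finset.sum_range_succ' (fun k => (n.choose k : R) * r₁ k * r₂ (n + 1 - k)) n]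
      simp [Nat.succ_sub_succ]
    rw [add_assoc, hB, ← Finset.sum_add_distrib, Finset.sum_mul]
    refine Finset.sum_congr rfl fun k hk => ?_
    have hk' : k ≤ n := Nat.lt_succ_iff.mp (Finset.mem_range.mp hk)
    have h1 : n + 1 - k = (n - k) + 1 := by omega
    have h2 : r₂ (n - k + 1) = r₂ (n - k) * (P₂ + ((n - k : ℕ):R) * Z) :=
      Finset.prod_range_succ _ _
    have h3 : ((n - k : ℕ) : R) = (n : R) - (k : R) := by
      push_cast [hk']; ring
    rw [h1, h2, h3]
    ring
end

section
/- Let B be a commutative ring, t ∈ B, m ≥ 1, and set B_k = B/t^k. Let M be a module over B_m and let e : Fin r → M be a family of elements whose images in M/tM form a basis of M/tM over B₁. Assume that for every 0 ≤ n ≤ m−1, multiplication by tⁿ induces an isomorphism of B₁-modules M/tM ≅ tⁿM/t^{n+1}M. Then e is a basis of M as a B_m-module (in particular M is finite free of rank r over B_m). -/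
/-- Let `B` be a commutative ring, `t ∈ B`, `m ≥ 1`, `B_k = B/t^k`. Let `M` be a
`B_m`-module (i.e. a `B`-module killed by `t^m`) and `e : Fin r → M` a family whose
images in `M/tM` form a basis over `B₁` (i.e. they generate `M` modulo `tM`, and any
`B`-relation among them modulo `tM` has all coefficients in `(t)`). Assume that for
every `0 ≤ n ≤ m−1` multiplication by `tⁿ` induces an isomorphism of `B₁`-modules
`M/tM ≅ tⁿM/t^{n+1}M` (surjectivity of the induced map is automatic; injectivity says
that `tⁿ•x ∈ t^{n+1}M` implies `x ∈ tM`). Then `e` is a basis of `M` over `B_m`: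
the coordinate map `(B_m)^r → M` is surjective and any `B`-relation among the `e i`
has all coefficients in `(t^m)`; in particular `M` is finite free of rank `r` over
`B_m`. -/
theorem basis_of_basis_mod_t {B : Type*} [CommRing B] (t : B) (m : ℕ) (hm : 1 ≤ m)
    {M : Type*} [AddCommGroup M] [Module B M]
    (htors : ∀ x : M, t ^ m • x = 0)
    {r : ℕ} (e : Fin r → M)
    -- the images of `e` generate `M/tM`
    (hgen : ∀ x : M, ∃ (c : Fin r → B) (y : M), x = (∑ i, c i • e i) + t • y)
    -- the images of `e` are linearly independent over `B₁ = B/t` in `M/tM`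
    (hindep : ∀ c : Fin r → B, (∃ y : M, ∑ i, c i • e i = t • y) →
        ∀ i, c i ∈ Ideal.span {t})
    -- multiplication by `tⁿ` induces an isomorphism `M/tM ≅ tⁿM/t^{n+1}M`
    (hiso : ∀ n < m, ∀ x : M, (∃ y : M, t ^ n • x = t ^ (n + 1) • y) →
        ∃ y : M, x = t • y) :
    (∀ x : M, ∃ c : Fin r → B, x = ∑ i, c i • e i) ∧
      (∀ c : Fin r → B, ∑ i, c i • e i = 0 → ∀ i, c i ∈ Ideal.span {t ^ m}) := by
  constructor
  · intro x
    have key : ∀ k, ∀ x : M, ∃ (c : Fin r → B) (y : M),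
        x = (∑ i, c i • e i) + t ^ k • y := by
      intro k
      induction k with
      | zero => intro x; exact ⟨0, x, by simp⟩
      | succ k ih =>
        intro x
        obtain ⟨c, y, hy⟩ := ih x
        obtain ⟨d, z, hz⟩ := hgen y
        refine ⟨fun i => c i + t ^ k * d i, z, ?_⟩
        rw [hy, hz, smul_add, Finset.smul_sum]
        simp only [add_smul, smul_smul, Finset.sum_add_distrib, pow_succ]
        abel
    obtain ⟨c, y, hy⟩ := key m x
    exact ⟨c, by rw [hy, htors y, add_zero]⟩
  · intro c hc
    have key : ∀ k, k ≤ m → ∀ i, c i ∈ Ideal.span {t ^ k} := by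
      intro k
      induction k with
      | zero => intro _ i; simp [Ideal.mem_span_singleton]
      | succ k ih =>
        intro hk i
        have hk' : k < m := hk
        have h := ih (le_of_lt hk')
        choose b hb using fun i => (Ideal.mem_span_singleton.mp (h i))
        have hsum : t ^ k • (∑ i, b i • e i) = t ^ (k + 1) • (0 : M) := by
          rw [Finset.smul_sum, smul_zero]
          rw [← hc]
          refine Finset.sum_congr rfl fun i _ => ?_
          rw [hb i, mul_smul]
        obtain ⟨y, hy⟩ := hiso k hk' _ ⟨0, hsum⟩
        have hb' := hindep b ⟨y, hy⟩ i
        obtain ⟨a, ha⟩ := Ideal.mem_span_singleton.mp hb'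
        rw [Ideal.mem_span_singleton]
        exact ⟨a, by rw [hb i, ha, pow_succ]; ring⟩
    exact key m le_rfl
end

section
/- Let B be a commutative ring with a non-zero divisor t, and set B_m := B/t^m for m ≥ 1. Let M be a B_m-module such that M/tM is a finite projective B₁-module and such that for every 0 ≤ n ≤ m−1 the multiplication by tⁿ induces an isomorphism of B₁-modules M/tM ≅ tⁿM/t^{n+1}M. Then M is a finite projective B_m-module. -/
open Submodule Pointwise Polynomial


/-- Nakayama lemma for a nilpotently-acting element. -/
private lemma aux_nak {B : Type*} [CommRing B] {M : Type*} [AddCommGroup M] [Module B M]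
    (t : B) (m : ℕ) (htors : Module.IsTorsionBy B M (t ^ m))
    (N : Submodule B M) (h : N ⊔ (Ideal.span {t} • ⊤ : Submodule B M) = ⊤) : N = ⊤ := by
  have key : ∀ k : ℕ, (⊤ : Submodule B M) ≤ N ⊔ (Ideal.span {t ^ k} • ⊤ : Submodule B M) := by
    intro k
    induction k with
    | zero =>
        rw [pow_zero, Ideal.span_singleton_one, Submodule.top_smul]
        exact le_sup_right
    | succ k ih =>
        refine le_trans ih (sup_le le_sup_left ?_)
        have h1 : (Ideal.span {t ^ k} • ⊤ : Submodule B M)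
            = Ideal.span {t ^ k} • N ⊔ Ideal.span {t ^ k} • (Ideal.span {t} • ⊤) := by
          rw [← Submodule.smul_sup, h]
        rw [h1]
        refine sup_le (le_trans Submodule.smul_le_right le_sup_left) ?_
        rw [← mul_smul, Ideal.span_singleton_mul_span_singleton, ← pow_succ]
        exact le_sup_right
  have h0 : (Ideal.span {t ^ m} • ⊤ : Submodule B M) = ⊥ := by
    rw [eq_bot_iff]
    refine Submodule.smul_le.2 fun r hr n _ => ?_
    rw [Ideal.mem_span_singleton] at hr
    obtain ⟨c, rfl⟩ := hr
    rw [mul_smul, Submodule.mem_bot]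
    have : t ^ m • (c • n) = 0 := @htors (c • n)
    simpa using this
  have := key m
  rw [h0, sup_bot_eq] at this
  exact le_antisymm le_top this


private lemma aux_JI {B R V : Type*} [CommRing B] [CommRing R] [Algebra B R]
    [AddCommGroup V] [Module B V] [Module R V] [IsScalarTower B R V] (t : B) (x : V) :
    x ∈ (Ideal.span {algebraMap B R t} • ⊤ : Submodule R V) ↔
      x ∈ (Ideal.span {t} • ⊤ : Submodule B V) := by
  constructor
  · intro hx
    refine Submodule.smul_induction_on hx ?_ ?_
    · intro r hr n _
      rw [Ideal.mem_span_singleton] at hr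
      obtain ⟨c, rfl⟩ := hr
      rw [mul_smul, algebraMap_smul]
      exact Submodule.smul_mem_smul (Ideal.mem_span_singleton_self t) Submodule.mem_top
    · intro a b ha hb
      exact add_mem ha hb
  · intro hx
    refine Submodule.smul_induction_on hx ?_ ?_
    · intro r hr n _
      rw [Ideal.mem_span_singleton] at hr
      obtain ⟨c, rfl⟩ := hr
      rw [mul_smul, ← algebraMap_smul R t (c • n)]
      exact Submodule.smul_mem_smul (Ideal.mem_span_singleton_self _) Submodule.mem_top
    · intro a b ha hb
      exact add_mem ha hb


private lemma aux_idem {R F : Type*} [CommRing R] [AddCommGroup F] [Module R F]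
    (J : Ideal R) (m : ℕ) (hJ : (J ^ m • ⊤ : Submodule R F) = ⊥) (φ : Module.End R F)
    (hφ : LinearMap.range (φ * φ - φ) ≤ (J • ⊤ : Submodule R F)) :
    ∃ e : Module.End R F, e * e = e ∧ LinearMap.range (e - φ) ≤ (J • ⊤ : Submodule R F) := by
  classical
  set NS : Module.End R F → Module.End R F := fun a => 3 * a ^ 2 - 2 * a ^ 3 with hNS
  have key : ∀ (s : ℕ) (a : Module.End R F),
      LinearMap.range (a * a - a) ≤ (J ^ s • ⊤ : Submodule R F) →
      LinearMap.range (NS a * NS a - NS a) ≤ (J ^ (s + s) • ⊤ : Submodule R F) ∧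
      LinearMap.range (NS a - a) ≤ (J ^ s • ⊤ : Submodule R F) := by
    intro s a ha
    have hid1 : NS a * NS a - NS a = (a * a - a) * ((a * a - a) * (4 * a ^ 2 - 4 * a - 3)) := by
      have h := congrArg (Polynomial.aeval a)
        (show ((3 * X ^ 2 - 2 * X ^ 3) * (3 * X ^ 2 - 2 * X ^ 3)
            - (3 * X ^ 2 - 2 * X ^ 3) : Polynomial ℤ)
          = (X * X - X) * ((X * X - X) * (4 * X ^ 2 - 4 * X - 3)) by ring)
      simpa [map_ofNat] using h
    have hid2 : NS a - a = (a * a - a) * (1 - 2 * a) := by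
      have h := congrArg (Polynomial.aeval a)
        (show ((3 * X ^ 2 - 2 * X ^ 3) - X : Polynomial ℤ)
          = (X * X - X) * (1 - 2 * X) by ring)
      simpa [map_ofNat] using h
    constructor
    · rw [hid1]
      rintro x ⟨v, rfl⟩
      have h1 : (((a * a - a) * (4 * a ^ 2 - 4 * a - 3) : Module.End R F)) v
          ∈ (J ^ s • ⊤ : Submodule R F) :=
        ha ⟨((4 * a ^ 2 - 4 * a - 3 : Module.End R F)) v, rfl⟩
      have h2 : (((a * a - a) * ((a * a - a) * (4 * a ^ 2 - 4 * a - 3)) : Module.End R F)) v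
          ∈ Submodule.map (a * a - a) (J ^ s • ⊤ : Submodule R F) := by
        rw [Module.End.mul_apply]
        exact Submodule.mem_map_of_mem h1
      rw [Submodule.map_smul'', Submodule.map_top] at h2
      have h3 : (J ^ s • LinearMap.range (a * a - a) : Submodule R F)
          ≤ J ^ (s + s) • ⊤ := by
        rw [pow_add, mul_smul]
        exact smul_mono_right (J ^ s) ha
      exact h3 h2
    · rw [hid2]
      rintro x ⟨v, rfl⟩
      exact ha ⟨((1 - 2 * a : Module.End R F)) v, rfl⟩
  have iter : ∀ k : ℕ, ∃ a : Module.End R F,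
      LinearMap.range (a * a - a) ≤ (J ^ (2 ^ k) • ⊤ : Submodule R F) ∧
      LinearMap.range (a - φ) ≤ (J • ⊤ : Submodule R F) := by
    intro k
    induction k with
    | zero => exact ⟨φ, by simpa using hφ, by simp⟩
    | succ k ih =>
        obtain ⟨a, h1, h2⟩ := ih
        obtain ⟨h3, h4⟩ := key (2 ^ k) a h1
        refine ⟨NS a, ?_, ?_⟩
        · have h5 : (2 : ℕ) ^ (k + 1) = 2 ^ k + 2 ^ k := by ring
          rw [h5]; exact h3
        · rintro x ⟨v, rfl⟩
          have h6 : (NS a - φ) v = (NS a - a) v + (a - φ) v := by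
            simp [LinearMap.sub_apply]
          rw [h6]
          have h7 : (J ^ (2 ^ k) • ⊤ : Submodule R F) ≤ J • ⊤ := by
            refine Submodule.smul_mono_left ?_
            calc J ^ (2 ^ k) ≤ J ^ 1 := Ideal.pow_le_pow_right Nat.one_le_two_pow
            _ = J := pow_one J
          exact add_mem (h7 (h4 ⟨v, rfl⟩)) (h2 ⟨v, rfl⟩)
  obtain ⟨e, h1, h2⟩ := iter m
  have h3 : LinearMap.range (e * e - e) ≤ (⊥ : Submodule R F) := by
    rw [← hJ]
    refine le_trans h1 (Submodule.smul_mono_left ?_)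
    exact Ideal.pow_le_pow_right (Nat.le_of_lt (Nat.lt_two_pow_self (n := m)))
  refine ⟨e, ?_, h2⟩
  have h4 : e * e - e = 0 := by
    ext v
    exact (Submodule.mem_bot R).1 (h3 ⟨v, rfl⟩)
  exact sub_eq_zero.1 h4

set_option maxHeartbeats 1000000 in
/-- Let `B` be a commutative ring with a non-zero divisor `t` and `m ≥ 1`. Let `M` be
a `B_m = B/t^m`-module (i.e. a `B`-module killed by `t^m`) such that `M/tM` is a
finite projective module over `B₁ = B/t`, and such that for every `0 ≤ n ≤ m−1`
multiplication by `tⁿ` induces an isomorphism of `B₁`-modules `M/tM ≅ tⁿM/t^{n+1}M`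
(surjectivity of the induced map being automatic, this says `tⁿ•x ∈ t^{n+1}M` implies
`x ∈ tM`). Then `M` is a finite projective `B_m`-module. -/
theorem finite_projective_of_finite_projective_mod_t {B : Type*} [CommRing B] (t : B)
    (ht : t ∈ nonZeroDivisors B) (m : ℕ) (hm : 1 ≤ m)
    {M : Type*} [AddCommGroup M] [Module B M]
    (htors : Module.IsTorsionBy B M (t ^ m))
    (hfin : Module.Finite (B ⧸ Ideal.span {t})
      (M ⧸ (Ideal.span {t} • ⊤ : Submodule B M)))
    (hproj : Module.Projective (B ⧸ Ideal.span {t})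
      (M ⧸ (Ideal.span {t} • ⊤ : Submodule B M)))
    (hiso : ∀ n < m, ∀ x : M, (∃ y : M, t ^ n • x = t ^ (n + 1) • y) →
        ∃ y : M, x = t • y) :
    letI : Module (B ⧸ Ideal.span {t ^ m}) M := htors.module
    Module.Finite (B ⧸ Ideal.span {t ^ m}) M ∧
      Module.Projective (B ⧸ Ideal.span {t ^ m}) M := by
  classical
  letI : Module (B ⧸ Ideal.span {t ^ m}) M := htors.module
  haveI hts : Module.IsTorsionBySet B M (Ideal.span {t ^ m} : Ideal B) :=
    (Module.isTorsionBySet_span_singleton_iff _).mpr htors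
  haveI : IsScalarTower B (B ⧸ Ideal.span {t ^ m}) M :=
    Module.IsTorsionBySet.isScalarTower hts
  have hmksurj : Function.Surjective (algebraMap B (B ⧸ Ideal.span {t ^ m})) :=
    Ideal.Quotient.mk_surjective
  have hmksurj1 : Function.Surjective (algebraMap B (B ⧸ Ideal.span {t})) :=
    Ideal.Quotient.mk_surjective
  haveI : IsScalarTower B (B ⧸ Ideal.span {t})
      (M ⧸ (Ideal.span {t} • ⊤ : Submodule B M)) :=
    Module.IsTorsionBySet.isScalarTower _
  have hnak : ∀ (N : Submodule B M),
      N ⊔ (Ideal.span {t} • ⊤ : Submodule B M) = ⊤ → N = ⊤ :=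
    fun N h => aux_nak t m htors N h
  -- Step 1: M is finite over B, hence over B ⧸ t^m
  have hfinB : Module.Finite B M := by
    obtain ⟨s, hs⟩ := Module.finite_def.mp hfin
    have hsB : Submodule.span B (s : Set (M ⧸ (Ideal.span {t} • ⊤ : Submodule B M))) = ⊤ := by
      rw [← Submodule.restrictScalars_span B (B ⧸ Ideal.span {t}) hmksurj1, hs]
      rfl
    choose lift hlift using Submodule.Quotient.mk_surjective (Ideal.span {t} • ⊤ : Submodule B M)
    set N : Submodule B M := Submodule.span B (lift '' (s : Set _)) with hN
    have hmap : Submodule.map (Ideal.span {t} • ⊤ : Submodule B M).mkQ N = ⊤ := by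
      rw [hN, Submodule.map_span, ← Set.image_comp]
      have : ((Ideal.span {t} • ⊤ : Submodule B M).mkQ ∘ lift) '' (s : Set _) = (s : Set _) := by
        ext y
        constructor
        · rintro ⟨z, hz, rfl⟩
          simpa [Submodule.mkQ_apply, hlift z] using hz
        · intro hy
          exact ⟨y, hy, by simp [Submodule.mkQ_apply, hlift y]⟩
      rw [this, hsB]
    have hsup : N ⊔ (Ideal.span {t} • ⊤ : Submodule B M) = ⊤ := by
      have h2 := Submodule.comap_map_mkQ (Ideal.span {t} • ⊤ : Submodule B M) N
      rw [hmap, Submodule.comap_top] at h2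
      rw [sup_comm]
      exact h2.symm
    have hNtop := hnak N hsup
    exact Module.finite_def.mpr ⟨(s.image lift), by rw [Finset.coe_image, ← hN, hNtop]⟩

  have hfinR : Module.Finite (B ⧸ Ideal.span {t ^ m}) M := by
    obtain ⟨s, hs⟩ := Module.finite_def.mp hfinB
    refine Module.finite_def.mpr ⟨s, ?_⟩
    rw [eq_top_iff]
    intro x _
    have h1 : Submodule.restrictScalars B
        (Submodule.span (B ⧸ Ideal.span {t ^ m}) (s : Set M)) = Submodule.span B (s : Set M) :=
      Submodule.restrictScalars_span B _ hmksurj _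
    have h2 : x ∈ Submodule.span B (s : Set M) := by rw [hs]; trivial
    rw [← h1] at h2
    exact h2
  refine ⟨hfinR, ?_⟩
  obtain ⟨r, fR, hfR⟩ := Module.Finite.exists_fin' (B ⧸ Ideal.span {t ^ m}) M
  set R := B ⧸ Ideal.span {t ^ m} with hR
  set F := (Fin r → R) with hF
  haveI tFq : IsScalarTower B (B ⧸ Ideal.span {t})
      (F ⧸ (Ideal.span {t} • ⊤ : Submodule B F)) :=
    Module.IsTorsionBySet.isScalarTower _
  haveI tMq : IsScalarTower B (B ⧸ Ideal.span {t})
      (M ⧸ (Ideal.span {t} • ⊤ : Submodule B M)) :=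
    Module.IsTorsionBySet.isScalarTower _
  -- the reduction of fR modulo t
  have hcomp : (Ideal.span {t} • ⊤ : Submodule B F) ≤
      Submodule.comap (fR.restrictScalars B) (Ideal.span {t} • ⊤ : Submodule B M) := by
    rw [← Submodule.map_le_iff_le_comap, Submodule.map_smul'']
    exact smul_mono_right _ le_top
  set fbar := LinearMap.extendScalarsOfSurjective hmksurj1
    (Submodule.mapQ (Ideal.span {t} • ⊤ : Submodule B F)
      (Ideal.span {t} • ⊤ : Submodule B M) (fR.restrictScalars B) hcomp) with hfbardef
  have hfbar : ∀ v : F, fbar (Submodule.Quotient.mk v) = Submodule.Quotient.mk (fR v) := by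
    intro v
    rfl
  have hfbarsurj : Function.Surjective fbar := by
    intro y
    obtain ⟨x, rfl⟩ := Submodule.Quotient.mk_surjective _ y
    obtain ⟨v, rfl⟩ := hfR x
    exact ⟨Submodule.Quotient.mk v, hfbar v⟩
  obtain ⟨s₀, hs₀⟩ := Module.projective_lifting_property fbar LinearMap.id hfbarsurj
  have hs₀' : ∀ y, fbar (s₀ y) = y := by
    intro y
    have := DFunLike.congr_fun hs₀ y
    simpa using this
  set e₀ := s₀ ∘ₗ fbar with he₀
  -- lift e₀ to a linear endomorphism of F
  set bF := Pi.basisFun R (Fin r) with hbF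
  choose glift hglift using
    Submodule.Quotient.mk_surjective (Ideal.span {t} • ⊤ : Submodule B F)
  set φ₀ : F →ₗ[R] F :=
    bF.constr ℕ (fun i => glift (e₀ (Submodule.Quotient.mk (bF i)))) with hφ₀def
  have hspanB : ∀ v : F, v ∈ Submodule.span B (Set.range ⇑bF) := by
    intro v
    have h1 : Submodule.restrictScalars B (Submodule.span R (Set.range ⇑bF)) =
        Submodule.span B (Set.range ⇑bF) :=
      Submodule.restrictScalars_span B R hmksurj _
    rw [← h1, bF.span_eq]
    trivial
  have hcommφ₀ : ∀ v : F, (Submodule.Quotient.mk (φ₀ v) :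
      F ⧸ (Ideal.span {t} • ⊤ : Submodule B F)) = e₀ (Submodule.Quotient.mk v) := by
    intro v
    refine Submodule.span_induction ?_ ?_ ?_ ?_ (hspanB v)
    · rintro x ⟨i, rfl⟩
      rw [hφ₀def, Module.Basis.constr_basis, hglift]
    · simp
    · intro x y _ _ hx hy
      have : (Submodule.Quotient.mk (φ₀ (x + y)) :
          F ⧸ (Ideal.span {t} • ⊤ : Submodule B F)) =
          Submodule.Quotient.mk (φ₀ x) + Submodule.Quotient.mk (φ₀ y) := by
        rw [map_add]
        rfl
      rw [this, hx, hy, ← map_add]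
      rfl
    · intro b x _ hx
      have h1 : φ₀ (b • x) = b • φ₀ x := LinearMap.map_smul_of_tower φ₀ b x
      have h2 : (Submodule.Quotient.mk (b • φ₀ x) :
          F ⧸ (Ideal.span {t} • ⊤ : Submodule B F)) = b • Submodule.Quotient.mk (φ₀ x) := rfl
      have h3 : (Submodule.Quotient.mk (b • x) :
          F ⧸ (Ideal.span {t} • ⊤ : Submodule B F)) = b • Submodule.Quotient.mk x := rfl
      rw [h1, h2, hx, h3, LinearMap.map_smul_of_tower]
  -- the ideal (t) in R
  set J : Ideal R := Ideal.span {algebraMap B R t} with hJdef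
  have he₀e₀ : ∀ y, e₀ (e₀ y) = e₀ y := by
    intro y
    rw [he₀]
    simp only [LinearMap.comp_apply]
    rw [hs₀']
  have hφ₀range : LinearMap.range (φ₀ * φ₀ - φ₀) ≤ (J • ⊤ : Submodule R F) := by
    rintro x ⟨v, rfl⟩
    have h1 : ((φ₀ * φ₀ - φ₀ : Module.End R F)) v = φ₀ (φ₀ v) - φ₀ v := by
      simp [Module.End.mul_apply]
    rw [h1]
    rw [hJdef, aux_JI]
    rw [← Submodule.Quotient.mk_eq_zero, Submodule.Quotient.mk_sub,
      hcommφ₀, hcommφ₀, he₀e₀, sub_self]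
  have hJm : (J ^ m • ⊤ : Submodule R F) = ⊥ := by
    have h1 : J ^ m = ⊥ := by
      rw [hJdef, Ideal.span_singleton_pow, ← map_pow]
      have h2 : algebraMap B R (t ^ m) = 0 := by
        rw [Ideal.Quotient.algebraMap_eq, Ideal.Quotient.eq_zero_iff_mem]
        exact Ideal.mem_span_singleton_self _
      rw [h2, Ideal.span_singleton_eq_bot.mpr rfl]
    rw [h1, Submodule.bot_smul]
  obtain ⟨e, he, heφ⟩ := aux_idem J m hJm φ₀ hφ₀range
  have he' : ∀ u, e (e u) = e u := by
    intro u
    have h := DFunLike.congr_fun he u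
    simpa [Module.End.mul_apply] using h
  have hcomm : ∀ v : F, (Submodule.Quotient.mk (e v) :
      F ⧸ (Ideal.span {t} • ⊤ : Submodule B F)) = e₀ (Submodule.Quotient.mk v) := by
    intro v
    have h1 : e v = φ₀ v + (e - φ₀) v := by simp
    have h2 : (e - φ₀) v ∈ (Ideal.span {t} • ⊤ : Submodule B F) := by
      rw [← aux_JI (R := R), ← hJdef]
      exact heφ ⟨v, rfl⟩
    rw [h1, Submodule.Quotient.mk_add, (Submodule.Quotient.mk_eq_zero _).2 h2, add_zero,
      hcommφ₀]
  set K := LinearMap.range e with hK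
  -- key fact: modulo-t injectivity on K
  have keyi : ∀ v : F, v ∈ K → fR v ∈ (Ideal.span {t} • ⊤ : Submodule B M) →
      ∃ w ∈ K, v = t • w := by
    intro v hv hfv
    have h2 : fbar (Submodule.Quotient.mk v) = 0 := by
      rw [hfbar v]
      exact (Submodule.Quotient.mk_eq_zero _).2 hfv
    obtain ⟨u, rfl⟩ := hv
    have h4 : (Submodule.Quotient.mk (e u) :
        F ⧸ (Ideal.span {t} • ⊤ : Submodule B F)) = 0 := by
      have h5 : e₀ (Submodule.Quotient.mk (e u)) = Submodule.Quotient.mk (e u) := by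
        rw [hcomm u, he₀e₀]
      rw [← h5, he₀, LinearMap.comp_apply, h2, map_zero]
    have h6 : e u ∈ (Ideal.span {t} • ⊤ : Submodule B F) :=
      (Submodule.Quotient.mk_eq_zero _).1 h4
    rw [Submodule.ideal_span_singleton_smul] at h6
    rw [← SetLike.mem_coe, Submodule.coe_pointwise_smul] at h6
    obtain ⟨y, -, hy⟩ := h6
    refine ⟨e y, LinearMap.mem_range_self e y, ?_⟩
    have h7 : e (e u) = e u := he' u
    rw [← h7, ← hy, LinearMap.map_smul_of_tower]
  -- surjectivity of fR restricted to K
  have hsurjg : ∀ x : M, ∃ k ∈ K, x - fR k ∈ (Ideal.span {t} • ⊤ : Submodule B M) := by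
    intro x
    obtain ⟨u, hu⟩ := Submodule.Quotient.mk_surjective _ (s₀ (Submodule.Quotient.mk x))
    refine ⟨e u, LinearMap.mem_range_self e u, ?_⟩
    have h1 : (Submodule.Quotient.mk (fR (e u)) :
        M ⧸ (Ideal.span {t} • ⊤ : Submodule B M)) = Submodule.Quotient.mk x := by
      calc (Submodule.Quotient.mk (fR (e u)) :
          M ⧸ (Ideal.span {t} • ⊤ : Submodule B M)) = fbar (Submodule.Quotient.mk (e u)) :=
            (hfbar (e u)).symm
      _ = fbar (e₀ (Submodule.Quotient.mk u)) := by rw [hcomm u]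
      _ = fbar (s₀ (fbar (Submodule.Quotient.mk u))) := rfl
      _ = fbar (Submodule.Quotient.mk u) := hs₀' _
      _ = fbar (s₀ (Submodule.Quotient.mk x)) := by rw [hu]
      _ = Submodule.Quotient.mk x := hs₀' _
    exact (Submodule.Quotient.eq _).1 h1.symm
  have hKtop : Submodule.map fR K = ⊤ := by
    have h1 : Submodule.restrictScalars B (Submodule.map fR K) ⊔
        (Ideal.span {t} • ⊤ : Submodule B M) = ⊤ := by
      rw [eq_top_iff]
      intro x _
      obtain ⟨k, hk, hxk⟩ := hsurjg x
      exact Submodule.mem_sup.2 ⟨fR k, ⟨k, hk, rfl⟩, x - fR k, hxk, by abel⟩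
    have h2 := hnak _ h1
    rw [eq_top_iff]
    intro x _
    exact (Submodule.restrictScalars_mem B _ x).1 (h2 ▸ Submodule.mem_top)
  -- injectivity of fR restricted to K
  have hinj : ∀ v : F, v ∈ K → fR v = 0 → v = 0 := by
    intro v hv hfv
    have main : ∀ n : ℕ, n ≤ m → ∃ w ∈ K, v = t ^ n • w := by
      intro n
      induction n with
      | zero =>
          intro _
          exact ⟨v, hv, by simp⟩
      | succ n ih =>
          intro hn
          obtain ⟨w, hw, hvw⟩ := ih (by omega)
          have h1 : t ^ n • fR w = 0 := by
            rw [← LinearMap.map_smul_of_tower, ← hvw, hfv]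
          have h2 : t ^ (m - 1) • fR w = 0 := by
            have h3 : t ^ (m - 1) = t ^ (m - 1 - n) * t ^ n := by
              rw [← pow_add]
              congr 1
              omega
            rw [h3, mul_smul, h1, smul_zero]
          obtain ⟨y, hy⟩ := hiso (m - 1) (by omega) (fR w) ⟨0, by rw [h2, smul_zero]⟩
          have h4 : fR w ∈ (Ideal.span {t} • ⊤ : Submodule B M) := by
            rw [hy]
            exact Submodule.smul_mem_smul (Ideal.mem_span_singleton_self t) Submodule.mem_top
          obtain ⟨w', hw', hww'⟩ := keyi w hw h4
          refine ⟨w', hw', ?_⟩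
          rw [hvw, hww', pow_succ, mul_smul]
    obtain ⟨w, hw, hvw⟩ := main m le_rfl
    have h5 : (t : B) ^ m • w = 0 := by
      rw [← algebraMap_smul R (t ^ m) w]
      have h6 : algebraMap B R (t ^ m) = 0 := by
        rw [Ideal.Quotient.algebraMap_eq, Ideal.Quotient.eq_zero_iff_mem]
        exact Ideal.mem_span_singleton_self _
      rw [h6, zero_smul]
    rw [hvw, h5]
  -- K is projective over R
  haveI hprojK : Module.Projective R ↥K := by
    refine Module.Projective.of_split K.subtype
      (LinearMap.codRestrict K e (fun x => LinearMap.mem_range_self e x)) ?_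
    apply LinearMap.ext
    rintro ⟨v, u, rfl⟩
    apply Subtype.ext
    exact he' u
  -- fR restricted to K is a bijection onto M
  have hgbij : Function.Bijective (fR ∘ₗ K.subtype) := by
    constructor
    · intro a b hab
      have h1 : (a : F) - (b : F) ∈ K := sub_mem a.2 b.2
      have h2 : fR ((a : F) - (b : F)) = 0 := by
        rw [map_sub]
        have : fR (a : F) = fR (b : F) := hab
        rw [this, sub_self]
      have h3 := hinj _ h1 h2
      exact Subtype.ext (by rwa [sub_eq_zero] at h3)
    · intro x
      have h1 : x ∈ Submodule.map fR K := hKtop ▸ Submodule.mem_top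
      obtain ⟨k, hk, rfl⟩ := h1
      exact ⟨⟨k, hk⟩, rfl⟩
  exact Module.Projective.of_equiv (LinearEquiv.ofBijective (fR ∘ₗ K.subtype) hgbij)
end

section
/- Let B be a commutative ring with a non-zero divisor t such that B is t-adically complete. Let M be a t-adically complete and separated B-module such that M/tM is a finite projective B/t-module and such that for every n ≥ 0 the multiplication by tⁿ induces an isomorphism of B/t-modules M/tM ≅ tⁿM/t^{n+1}M. Then M is a finite projective B-module. -/
section FPOC
variable {B : Type*} [CommRing B] (t : B) {M : Type*} [AddCommGroup M] [Module B M]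

private lemma fpoc_mem (n : ℕ) (x : M) :
    x ∈ ((Ideal.span {t}) ^ n • ⊤ : Submodule B M) ↔ ∃ y, x = t ^ n • y := by
  rw [Ideal.span_singleton_pow, Submodule.ideal_span_singleton_smul,
    ← SetLike.mem_coe, Submodule.coe_pointwise_smul]
  constructor
  · rintro ⟨y, -, rfl⟩; exact ⟨y, rfl⟩
  · rintro ⟨y, rfl⟩; exact ⟨y, trivial, rfl⟩

private lemma fpoc_mem1 (x : M) :
    x ∈ ((Ideal.span {t}) • ⊤ : Submodule B M) ↔ ∃ y, x = t • y := by
  have h := fpoc_mem t 1 x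
  rw [pow_one] at h
  simpa using h

private lemma fpoc_haus [IsHausdorff (Ideal.span {t}) M] (x : M)
    (h : ∀ n, ∃ y, x = t ^ n • y) : x = 0 := by
  refine IsHausdorff.haus ‹IsHausdorff (Ideal.span {t}) M› x fun n => ?_
  rw [SModEq.zero, fpoc_mem]
  exact h n

private lemma fpoc_prec [IsPrecomplete (Ideal.span {t}) M] (f : ℕ → M)
    (h : ∀ n, ∃ y, f (n + 1) - f n = t ^ n • y) :
    ∃ L, ∀ n, ∃ y, L - f n = t ^ n • y := by
  have key : ∀ m n, m ≤ n → ∃ y, f n - f m = t ^ m • y := by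
    intro m n hmn
    induction n with
    | zero => exact ⟨0, by simp [Nat.le_zero.mp hmn]⟩
    | succ n ih =>
      rcases Nat.lt_or_ge m (n+1) with hlt | hge
      · have hmn' : m ≤ n := Nat.lt_succ_iff.mp hlt
        obtain ⟨y, hy⟩ := ih hmn'
        obtain ⟨z, hz⟩ := h n
        refine ⟨y + t ^ (n - m) • z, ?_⟩
        have e1 : f (n+1) - f m = (f (n+1) - f n) + (f n - f m) := by abel
        rw [e1, hy, hz, smul_add, smul_smul, ← pow_add, Nat.add_sub_cancel' hmn']
        abel
      · have : m = n + 1 := le_antisymm hmn hge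
        exact ⟨0, by simp [this]⟩
  obtain ⟨L, hL⟩ := IsPrecomplete.prec ‹IsPrecomplete (Ideal.span {t}) M›
    (f := f) (fun {m n} hmn => by
      rw [SModEq.sub_mem, fpoc_mem]
      obtain ⟨y, hy⟩ := key m n hmn
      exact ⟨-y, by rw [← neg_sub, hy, smul_neg]⟩)
  refine ⟨L, fun n => ?_⟩
  have h2 := SModEq.sub_mem.mp (hL n)
  rw [fpoc_mem] at h2
  obtain ⟨y, hy⟩ := h2
  exact ⟨-y, by rw [smul_neg, ← hy]; abel⟩

private lemma fpoc_pi_haus {ι : Type*} [IsHausdorff (Ideal.span {t}) B] (x : ι → B)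
    (h : ∀ n, ∃ y : ι → B, x = t ^ n • y) : x = 0 := by
  funext i
  refine fpoc_haus t (x i) fun n => ?_
  obtain ⟨y, hy⟩ := h n
  exact ⟨y i, by rw [hy]; simp⟩

private lemma fpoc_pi_prec {ι : Type*} [IsPrecomplete (Ideal.span {t}) B] (f : ℕ → ι → B)
    (h : ∀ n, ∃ y : ι → B, f (n + 1) - f n = t ^ n • y) :
    ∃ L : ι → B, ∀ n, ∃ y : ι → B, L - f n = t ^ n • y := by
  have hc : ∀ i : ι, ∃ Li : B, ∀ n, ∃ c, Li - f n i = t ^ n • c := by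
    intro i
    refine fpoc_prec t (fun n => f n i) fun n => ?_
    obtain ⟨y, hy⟩ := h n
    exact ⟨y i, by have := congrFun hy i; simpa using this⟩
  choose L hL using hc
  refine ⟨L, fun n => ?_⟩
  choose y hy using fun i => hL i n
  exact ⟨y, funext fun i => by simpa using hy i⟩

end FPOC
section FPOC2
variable {B : Type*} [CommRing B] (t : B) {M : Type*} [AddCommGroup M] [Module B M]

private lemma fpoc_exists_surj [IsHausdorff (Ideal.span {t}) M]
    [IsPrecomplete (Ideal.span {t}) B]
    (hfin : Module.Finite (B ⧸ Ideal.span {t})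
      (M ⧸ (Ideal.span {t} • ⊤ : Submodule B M))) :
    ∃ (r : ℕ) (π : (Fin r → B) →ₗ[B] M), Function.Surjective π := by
  classical
  obtain ⟨r, s, hs⟩ := Module.Finite.exists_fin (R := B ⧸ Ideal.span {t})
    (M := M ⧸ (Ideal.span {t} • ⊤ : Submodule B M))
  have hmk : Function.Surjective
      (Submodule.mkQ (Ideal.span {t} • ⊤ : Submodule B M)) :=
    Submodule.mkQ_surjective _
  choose x hx using fun i => hmk (s i)
  set π : (Fin r → B) →ₗ[B] M := Fintype.linearCombination B x with hπdef
  have halg : Function.Surjective (algebraMap B (B ⧸ Ideal.span {t})) := by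
    rw [Ideal.Quotient.algebraMap_eq]; exact Ideal.Quotient.mk_surjective
  have hspanB : Submodule.span B (Set.range s) = ⊤ := by
    have h := Submodule.restrictScalars_span B (B ⧸ Ideal.span {t}) halg (Set.range s)
    rw [hs] at h
    rw [← h]
    rfl
  have hstep : ∀ m : M, ∃ c : Fin r → B, ∃ y : M, m = π c + t • y := by
    intro m
    have hrange : (Set.range fun i =>
        Submodule.mkQ (Ideal.span {t} • ⊤ : Submodule B M) (x i)) = Set.range s :=
      congrArg Set.range (funext hx)
    have h1 : Submodule.mkQ (Ideal.span {t} • ⊤ : Submodule B M) m ∈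
        Submodule.map (Submodule.mkQ (Ideal.span {t} • ⊤ : Submodule B M))
          (Submodule.span B (Set.range x)) := by
      rw [← Submodule.span_image, ← Set.range_comp]
      have : (Submodule.mkQ (Ideal.span {t} • ⊤ : Submodule B M)) ∘ x
          = fun i => Submodule.mkQ (Ideal.span {t} • ⊤ : Submodule B M) (x i) := rfl
      rw [this, hrange, hspanB]
      trivial
    obtain ⟨m₀, hm₀, hmk0⟩ := Submodule.mem_map.mp h1
    rw [Submodule.mem_span_range_iff_exists_fun] at hm₀
    obtain ⟨c, hc⟩ := hm₀
    have hsub : m₀ - m ∈ (Ideal.span {t} • ⊤ : Submodule B M) := by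
      rw [← Submodule.Quotient.eq]
      exact hmk0
    rw [fpoc_mem1] at hsub
    obtain ⟨y, hy⟩ := hsub
    refine ⟨c, -y, ?_⟩
    have hπc : π c = m₀ := by rw [hπdef, Fintype.linearCombination_apply]; exact hc
    rw [hπc, smul_neg, ← hy]; abel
  choose cof next hnext using hstep
  refine ⟨r, π, fun m => ?_⟩
  set mseq : ℕ → M := fun n => next^[n] m with hmseq
  have hms : ∀ n, mseq (n+1) = next (mseq n) := fun n =>
    Function.iterate_succ_apply' next n m
  set S : ℕ → Fin r → B := fun n => ∑ j ∈ Finset.range n, t ^ j • cof (mseq j) with hS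
  obtain ⟨C, hC⟩ := fpoc_pi_prec t S
    (fun n => ⟨cof (mseq n), by rw [hS]; simp [Finset.sum_range_succ]⟩)
  have happrox : ∀ n, m - π (S n) = t ^ n • mseq n := by
    intro n
    induction n with
    | zero => simp [hS, hmseq]
    | succ n ih =>
      have hSn : S (n+1) = S n + t ^ n • cof (mseq n) := by
        rw [hS]; simp [Finset.sum_range_succ]
      rw [hSn, map_add, map_smul]
      have hrec : mseq n - π (cof (mseq n)) = t • mseq (n+1) := by
        rw [hms n, sub_eq_iff_eq_add]
        exact (hnext (mseq n)).trans (add_comm _ _)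
      calc m - (π (S n) + t ^ n • π (cof (mseq n)))
          = (m - π (S n)) - t ^ n • π (cof (mseq n)) := by abel
        _ = t ^ n • (mseq n - π (cof (mseq n))) := by rw [ih, smul_sub]
        _ = t ^ n • (t • mseq (n+1)) := by rw [hrec]
        _ = t ^ (n+1) • mseq (n+1) := by rw [smul_smul, ← pow_succ]
  refine ⟨C, ?_⟩
  have hz : ∀ n, ∃ z : M, π C - m = t ^ n • z := by
    intro n
    obtain ⟨y, hy⟩ := hC n
    refine ⟨π y - mseq n, ?_⟩
    have h3 : π C - π (S n) = t ^ n • π y := by rw [← map_sub, hy, map_smul]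
    calc π C - m = (π C - π (S n)) - (m - π (S n)) := by abel
      _ = t ^ n • π y - t ^ n • mseq n := by rw [h3, happrox n]
      _ = t ^ n • (π y - mseq n) := (smul_sub _ _ _).symm
  have h0 := fpoc_haus t (π C - m) hz
  exact sub_eq_zero.mp h0

end FPOC2
section FPOC3
variable {B : Type*} [CommRing B] (t : B) {M : Type*} [AddCommGroup M] [Module B M]

private lemma fpoc_divK [IsHausdorff (Ideal.span {t}) M] [IsHausdorff (Ideal.span {t}) B]
    [IsPrecomplete (Ideal.span {t}) B]
    {r : ℕ} (π : (Fin r → B) →ₗ[B] M) (hπ : Function.Surjective π)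
    (hiso : ∀ n : ℕ, ∀ x : M, (∃ y : M, t ^ n • x = t ^ (n + 1) • y) →
        ∃ y : M, x = t • y)
    (n : ℕ) (x : Fin r → B) (hxK : π x = 0) (f : Fin r → B) (hf : x = t ^ n • f) :
    ∃ k, π k = 0 ∧ x = t ^ n • k := by
  classical
  have key : ∀ (j : ℕ) (g : Fin r → B), π (t ^ (n + j) • g) = 0 →
      ∃ kg : (Fin r → B) × (Fin r → B), π kg.1 = 0 ∧
        t ^ (n + j) • g = t ^ (n + j) • kg.1 + t ^ (n + j + 1) • kg.2 ∧
        π (t ^ (n + j + 1) • kg.2) = 0 := by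
    intro j g hg
    have h1 : t ^ (n + j) • π g = 0 := by rw [← map_smul, hg]
    obtain ⟨y, hy⟩ := hiso (n + j) (π g) ⟨0, by rw [h1, smul_zero]⟩
    obtain ⟨g', hg'⟩ := hπ y
    have hty : t ^ (n + j + 1) • y = 0 := by
      rw [pow_succ, mul_smul, ← hy, h1]
    refine ⟨(g - t • g', g'), ?_, ?_, ?_⟩
    · rw [map_sub, map_smul, hg', ← hy, sub_self]
    · rw [smul_sub, smul_smul, ← pow_succ]; abel
    · rw [map_smul, hg', hty]
  choose kg h1 h2 h3 using key
  let fs : ∀ _j : ℕ, {g : Fin r → B // π (t ^ (n + _j) • g) = 0} := fun j =>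
    Nat.rec ⟨f, by simpa only [Nat.add_zero, ← hf] using hxK⟩
      (fun j p => ⟨(kg j p.1 p.2).2, h3 j p.1 p.2⟩) j
  have hfs : ∀ j, ((fs (j+1) : {g : Fin r → B // π (t ^ (n + (j+1)) • g) = 0}) : Fin r → B)
      = (kg j (fs j).1 (fs j).2).2 := fun j => rfl
  set ks : ℕ → Fin r → B := fun j => (kg j (fs j).1 (fs j).2).1 with hksdef
  set gs : ℕ → Fin r → B := fun j => (fs j).1 with hgsdef
  have hks0 : ∀ j, π (ks j) = 0 := fun j => h1 j _ _
  have hdec : ∀ j, t ^ (n+j) • gs j = t ^ (n+j) • ks j + t ^ (n+j+1) • gs (j+1) :=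
    fun j => h2 j (fs j).1 (fs j).2
  set P : ℕ → Fin r → B := fun m => ∑ j ∈ Finset.range m, t ^ j • ks j with hP
  have hxP : ∀ m, x = t ^ n • P m + t ^ (n + m) • gs m := by
    intro m
    induction m with
    | zero =>
      have : gs 0 = f := rfl
      simpa [hP, this] using hf
    | succ m ih =>
      have hPm : P (m+1) = P m + t ^ m • ks m := by rw [hP]; simp [Finset.sum_range_succ]
      rw [hPm, smul_add, smul_smul, ← pow_add]
      rw [ih, hdec m]
      have : n + m + 1 = n + (m + 1) := by omega
      rw [this]; abel
  obtain ⟨L, hL⟩ := fpoc_pi_prec t P (fun m => ⟨ks m, by rw [hP]; simp [Finset.sum_range_succ]⟩)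
  have hπL : π L = 0 := by
    refine fpoc_haus t (π L) fun m => ?_
    obtain ⟨y, hy⟩ := hL m
    have hπP : π (P m) = 0 := by
      rw [hP]; simp only [map_sum, map_smul]
      simp [hks0]
    refine ⟨π y, ?_⟩
    have h5 : π L - π (P m) = t ^ m • π y := by rw [← map_sub, hy, map_smul]
    rw [hπP, sub_zero] at h5; exact h5
  refine ⟨L, hπL, ?_⟩
  have hdiff : ∀ m, ∃ z : Fin r → B, x - t ^ n • L = t ^ m • z := by
    intro m
    obtain ⟨y, hy⟩ := hL m
    refine ⟨t ^ n • (gs m - y), ?_⟩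
    have e1 : x - t ^ n • P m = t ^ (n + m) • gs m := by rw [hxP m]; abel
    calc x - t ^ n • L = (x - t ^ n • P m) - t ^ n • (L - P m) := by
          rw [smul_sub]; abel
      _ = t ^ (n+m) • gs m - t ^ n • (t ^ m • y) := by rw [e1, hy]
      _ = t ^ (n+m) • gs m - t ^ (n+m) • y := by rw [smul_smul, ← pow_add]
      _ = t ^ (n+m) • (gs m - y) := by rw [smul_sub]
      _ = t ^ m • t ^ n • (gs m - y) := by
          rw [smul_smul, ← pow_add, Nat.add_comm n m]
  have h0 := fpoc_pi_haus t (x - t ^ n • L) hdiff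
  exact sub_eq_zero.mp h0

end FPOC3
section FPOC4
variable {B : Type*} [CommRing B] (t : B) {M : Type*} [AddCommGroup M] [Module B M]

private lemma fpoc_exists_rho0 {r : ℕ} (π : (Fin r → B) →ₗ[B] M)
    (hπ : Function.Surjective π)
    (hproj : Module.Projective (B ⧸ Ideal.span {t})
      (M ⧸ (Ideal.span {t} • ⊤ : Submodule B M))) :
    ∃ ρ₀ : (Fin r → B) →ₗ[B] (Fin r → B),
      (∀ g, π (ρ₀ g) = 0) ∧ ∀ x, π x = 0 → ∃ y, x - ρ₀ x = t • y := by
  classical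
  set mkM : M →ₗ[B] M ⧸ (Ideal.span {t} • ⊤ : Submodule B M) :=
    Submodule.mkQ _ with hmkM
  set mkF : (Fin r → B) →ₗ[B]
      (Fin r → B) ⧸ (Ideal.span {t} • ⊤ : Submodule B (Fin r → B)) :=
    Submodule.mkQ _ with hmkF
  set pB : (Fin r → B) →ₗ[B] M ⧸ (Ideal.span {t} • ⊤ : Submodule B M) :=
    mkM ∘ₗ π with hpB
  have hle : (Ideal.span {t} • ⊤ : Submodule B (Fin r → B)) ≤ LinearMap.ker pB := by
    intro z hz
    rw [fpoc_mem1] at hz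
    obtain ⟨y, rfl⟩ := hz
    rw [LinearMap.mem_ker, hpB, LinearMap.comp_apply, map_smul, hmkM, Submodule.mkQ_apply,
      Submodule.Quotient.mk_eq_zero, fpoc_mem1]
    exact ⟨π y, rfl⟩
  set p' : ((Fin r → B) ⧸ (Ideal.span {t} • ⊤ : Submodule B (Fin r → B)))
      →ₗ[B] M ⧸ (Ideal.span {t} • ⊤ : Submodule B M) :=
    Submodule.liftQ _ pB hle with hp'
  have halg : Function.Surjective (algebraMap B (B ⧸ Ideal.span {t})) := by
    rw [Ideal.Quotient.algebraMap_eq]; exact Ideal.Quotient.mk_surjective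
  set p : ((Fin r → B) ⧸ (Ideal.span {t} • ⊤ : Submodule B (Fin r → B)))
      →ₗ[B ⧸ Ideal.span {t}] M ⧸ (Ideal.span {t} • ⊤ : Submodule B M) :=
    p'.extendScalarsOfSurjective halg with hp
  have hpmk : ∀ g : Fin r → B, p (mkF g) = mkM (π g) := fun g => by
    rw [hp, LinearMap.extendScalarsOfSurjective_apply, hp', hmkF, Submodule.mkQ_apply,
      Submodule.liftQ_apply, hpB, LinearMap.comp_apply]
  have hpsurj : Function.Surjective p := by
    intro nn
    obtain ⟨mm, rfl⟩ := Submodule.mkQ_surjective _ nn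
    obtain ⟨g, rfl⟩ := hπ mm
    exact ⟨mkF g, hpmk g⟩
  obtain ⟨s, hsplit⟩ := Module.projective_lifting_property p LinearMap.id hpsurj
  have hps : ∀ ζ, p (s ζ) = ζ := fun ζ => by
    have := congrArg (fun φ => φ ζ) hsplit
    simpa using this
  have hlift : ∀ ζ, p ζ = 0 → ∃ k, π k = 0 ∧ mkF k = ζ := by
    intro ζ hζ
    obtain ⟨g, rfl⟩ := Submodule.mkQ_surjective _ ζ
    have h1 : mkM (π g) = 0 := by rw [← hpmk]; exact hζ
    rw [hmkM, Submodule.mkQ_apply, Submodule.Quotient.mk_eq_zero, fpoc_mem1] at h1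
    obtain ⟨m', hm'⟩ := h1
    obtain ⟨g', hg'⟩ := hπ m'
    refine ⟨g - t • g', ?_, ?_⟩
    · rw [map_sub, map_smul, hg', ← hm', sub_self]
    · have h2 : mkF (t • g') = 0 := by
        rw [hmkF, Submodule.mkQ_apply, Submodule.Quotient.mk_eq_zero, fpoc_mem1]
        exact ⟨g', rfl⟩
      rw [map_sub, h2, sub_zero]
  set e : Fin r → (Fin r → B) := fun i j => if i = j then 1 else 0 with he
  have hker : ∀ i, p (mkF (e i) - s (p (mkF (e i)))) = 0 := by
    intro i
    rw [map_sub, hps, sub_self]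
  choose v hv1 hv2 using fun i => hlift _ (hker i)
  set ρ₀ : (Fin r → B) →ₗ[B] (Fin r → B) := Fintype.linearCombination B v with hρ₀
  have hρK : ∀ g, π (ρ₀ g) = 0 := by
    intro g
    rw [hρ₀, Fintype.linearCombination_apply, map_sum]
    simp only [map_smul, hv1, smul_zero, Finset.sum_const_zero]
  refine ⟨ρ₀, hρK, ?_⟩
  intro x hx
  set w : (Fin r → B) →ₗ[B]
      ((Fin r → B) ⧸ (Ideal.span {t} • ⊤ : Submodule B (Fin r → B))) :=
    (LinearMap.restrictScalars B (s ∘ₗ p)) ∘ₗ mkF with hw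
  have hwe : ∀ g : Fin r → B, w g = s (p (mkF g)) := fun g => rfl
  have hFx : mkF (ρ₀ x) = mkF x - s (p (mkF x)) := by
    have hxsum : x = ∑ i, x i • e i := pi_eq_sum_univ x
    have hsum2 : ρ₀ x = ∑ i, x i • v i := by rw [hρ₀, Fintype.linearCombination_apply]
    calc mkF (ρ₀ x) = ∑ i, x i • mkF (v i) := by rw [hsum2, map_sum]; simp only [map_smul]
      _ = ∑ i, (x i • mkF (e i) - x i • w (e i)) := by
          refine Finset.sum_congr rfl fun i _ => ?_
          rw [hv2 i, smul_sub, hwe]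
      _ = (∑ i, x i • mkF (e i)) - ∑ i, x i • w (e i) := Finset.sum_sub_distrib _ _
      _ = mkF x - w x := by
          congr 1
          · conv_rhs => rw [hxsum]
            rw [map_sum]; simp only [map_smul]
          · conv_rhs => rw [hxsum]
            rw [map_sum]; simp only [map_smul]
      _ = mkF x - s (p (mkF x)) := by rw [hwe]
  have hpx : p (mkF x) = 0 := by
    rw [hpmk, hx, map_zero]
  have hmk0 : mkF (x - ρ₀ x) = 0 := by
    rw [map_sub, hFx, hpx, map_zero, sub_zero, sub_self]
  rw [hmkF, Submodule.mkQ_apply, Submodule.Quotient.mk_eq_zero, fpoc_mem1] at hmk0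
  exact hmk0

end FPOC4
section FPOC5
variable {B : Type*} [CommRing B] (t : B) {M : Type*} [AddCommGroup M] [Module B M]

private lemma fpoc_exists_rho [IsHausdorff (Ideal.span {t}) M]
    [IsHausdorff (Ideal.span {t}) B] [IsPrecomplete (Ideal.span {t}) B]
    {r : ℕ} (π : (Fin r → B) →ₗ[B] M) (hπ : Function.Surjective π)
    (hiso : ∀ n : ℕ, ∀ x : M, (∃ y : M, t ^ n • x = t ^ (n + 1) • y) →
        ∃ y : M, x = t • y)
    (hproj : Module.Projective (B ⧸ Ideal.span {t})
      (M ⧸ (Ideal.span {t} • ⊤ : Submodule B M))) :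
    ∃ ρ : (Fin r → B) →ₗ[B] (Fin r → B),
      (∀ g, π (ρ g) = 0) ∧ ∀ x, π x = 0 → ρ x = x := by
  classical
  obtain ⟨ρ₀, h1, h2⟩ := fpoc_exists_rho0 t π hπ hproj
  have P2 : ∀ x, π x = 0 → ∃ k, π k = 0 ∧ x - ρ₀ x = t • k := by
    intro x hx
    obtain ⟨y, hy⟩ := h2 x hx
    have hker : π (x - ρ₀ x) = 0 := by rw [map_sub, hx, h1, sub_zero]
    obtain ⟨k, hk1, hk2⟩ := fpoc_divK t π hπ hiso 1 (x - ρ₀ x) hker y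
      (by rw [pow_one]; exact hy)
    exact ⟨k, hk1, by rw [hk2, pow_one]⟩
  set A : (Fin r → B) →ₗ[B] (Fin r → B) := LinearMap.id - ρ₀ with hA
  have powdiv : ∀ x, π x = 0 → ∀ j, ∃ w, π w = 0 ∧ (A ^ j) x = t ^ j • w := by
    intro x hx j
    induction j with
    | zero => exact ⟨x, hx, by simp⟩
    | succ j ih =>
      obtain ⟨w, hw1, hw2⟩ := ih
      obtain ⟨w', hw'1, hw'2⟩ := P2 w hw1
      refine ⟨w', hw'1, ?_⟩
      have e1 : (A ^ (j+1)) x = A ((A ^ j) x) := by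
        rw [pow_succ']; rfl
      have e2 : A w = t • w' := by
        rw [hA, LinearMap.sub_apply, LinearMap.id_apply, hw'2]
      rw [e1, hw2, map_smul, e2, smul_smul, ← pow_succ]
  set ρm : ℕ → (Fin r → B) →ₗ[B] (Fin r → B) :=
    fun m => (∑ j ∈ Finset.range m, A ^ j) ∘ₗ ρ₀ with hρm
  have hρmapp : ∀ m g, ρm m g = ∑ j ∈ Finset.range m, (A ^ j) (ρ₀ g) := by
    intro m g
    rw [hρm]
    simp [LinearMap.sum_apply]
  set e : Fin r → (Fin r → B) := fun i j => if i = j then 1 else 0 with he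
  have hcau : ∀ i, ∃ Li : Fin r → B, ∀ m, ∃ y, Li - ρm m (e i) = t ^ m • y := by
    intro i
    refine fpoc_pi_prec t (fun m => ρm m (e i)) fun m => ?_
    obtain ⟨w, hw1, hw2⟩ := powdiv (ρ₀ (e i)) (h1 (e i)) m
    refine ⟨w, ?_⟩
    show ρm (m+1) (e i) - ρm m (e i) = t ^ m • w
    rw [hρmapp, hρmapp, Finset.sum_range_succ, hw2]
    abel
  choose L hL using hcau
  set ρ : (Fin r → B) →ₗ[B] (Fin r → B) := Fintype.linearCombination B L with hρ
  have happrox : ∀ g m, ∃ y, ρ g - ρm m g = t ^ m • y := by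
    intro g m
    choose y hy using fun i => hL i m
    refine ⟨∑ i, g i • y i, ?_⟩
    have hgsum : g = ∑ i, g i • e i := pi_eq_sum_univ g
    have e3 : ρm m g = ∑ i, g i • ρm m (e i) := by
      conv_lhs => rw [hgsum]
      rw [map_sum]; simp only [map_smul]
    calc ρ g - ρm m g = ∑ i, g i • L i - ∑ i, g i • ρm m (e i) := by
          rw [hρ, Fintype.linearCombination_apply, e3]
      _ = ∑ i, (g i • L i - g i • ρm m (e i)) := (Finset.sum_sub_distrib _ _).symm
      _ = ∑ i, g i • (t ^ m • y i) := by
          refine Finset.sum_congr rfl fun i _ => ?_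
          rw [← smul_sub, hy i]
      _ = t ^ m • ∑ i, g i • y i := by
          rw [Finset.smul_sum]
          refine Finset.sum_congr rfl fun i _ => ?_
          rw [smul_comm]
  have hρmK : ∀ m g, π (ρm m g) = 0 := by
    intro m g
    rw [hρmapp, map_sum]
    refine Finset.sum_eq_zero fun j _ => ?_
    obtain ⟨w, hw1, hw2⟩ := powdiv (ρ₀ g) (h1 g) j
    rw [hw2, map_smul, hw1, smul_zero]
  have hρK : ∀ g, π (ρ g) = 0 := by
    intro g
    refine fpoc_haus t (π (ρ g)) fun m => ?_
    obtain ⟨y, hy⟩ := happrox g m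
    refine ⟨π y, ?_⟩
    have : π (ρ g) - π (ρm m g) = t ^ m • π y := by rw [← map_sub, hy, map_smul]
    rw [hρmK, sub_zero] at this
    exact this
  refine ⟨ρ, hρK, ?_⟩
  intro x hx
  have htel : ∀ m, x - ρm m x = (A ^ m) x := by
    intro m
    induction m with
    | zero => simp [hρmapp]
    | succ m ih =>
      have e1 : ρm (m+1) x = ρm m x + (A ^ m) (ρ₀ x) := by
        rw [hρmapp, hρmapp, Finset.sum_range_succ]
      have e2 : (A ^ (m+1)) x = (A ^ m) x - (A ^ m) (ρ₀ x) := by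
        have e4 : (A ^ (m+1)) x = (A ^ m) (A x) := by rw [pow_succ]; rfl
        have e5 : A x = x - ρ₀ x := by rw [hA, LinearMap.sub_apply, LinearMap.id_apply]
        rw [e4, e5, map_sub]
      rw [e1, e2, ← ih]
      abel
  have hdiff : ∀ m, ∃ y, x - ρ x = t ^ m • y := by
    intro m
    obtain ⟨w, hw1, hw2⟩ := powdiv x hx m
    obtain ⟨y, hy⟩ := happrox x m
    refine ⟨w - y, ?_⟩
    calc x - ρ x = (x - ρm m x) - (ρ x - ρm m x) := by abel
      _ = t ^ m • w - t ^ m • y := by rw [htel m, hw2, hy]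
      _ = t ^ m • (w - y) := (smul_sub _ _ _).symm
  have h0 := fpoc_pi_haus t (x - ρ x) hdiff
  exact (sub_eq_zero.mp h0).symm

end FPOC5
/-- Let `B` be a commutative ring with a non-zero divisor `t` such that `B` is
`t`-adically complete. Let `M` be a `t`-adically complete and separated `B`-module
such that `M/tM` is a finite projective `B/t`-module and such that for every `n ≥ 0`
multiplication by `tⁿ` induces an isomorphism of `B/t`-modules `M/tM ≅ tⁿM/t^{n+1}M`
(surjectivity of the induced map being automatic, this says `tⁿ•x ∈ t^{n+1}M` implies
`x ∈ tM`). Then `M` is a finite projective `B`-module. -/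
theorem finite_projective_of_complete {B : Type*} [CommRing B] (t : B)
    (ht : t ∈ nonZeroDivisors B)
    [IsAdicComplete (Ideal.span {t}) B]
    {M : Type*} [AddCommGroup M] [Module B M]
    [IsAdicComplete (Ideal.span {t}) M]
    (hfin : Module.Finite (B ⧸ Ideal.span {t})
      (M ⧸ (Ideal.span {t} • ⊤ : Submodule B M)))
    (hproj : Module.Projective (B ⧸ Ideal.span {t})
      (M ⧸ (Ideal.span {t} • ⊤ : Submodule B M)))
    (hiso : ∀ n : ℕ, ∀ x : M, (∃ y : M, t ^ n • x = t ^ (n + 1) • y) →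
        ∃ y : M, x = t • y) :
    Module.Finite B M ∧ Module.Projective B M := by
  obtain ⟨r, π, hπ⟩ := fpoc_exists_surj t hfin
  obtain ⟨ρ, hρK, hfix⟩ := fpoc_exists_rho t π hπ hiso hproj
  refine ⟨Module.Finite.of_surjective π hπ, ?_⟩
  set τ : (Fin r → B) →ₗ[B] (Fin r → B) := LinearMap.id - ρ with hτ
  have hKle : LinearMap.ker π ≤ LinearMap.ker τ := by
    intro x hx
    rw [LinearMap.mem_ker] at hx ⊢
    rw [hτ, LinearMap.sub_apply, LinearMap.id_apply, hfix x hx, sub_self]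
  set eqv := π.quotKerEquivOfSurjective hπ with heqv
  set σ : M →ₗ[B] (Fin r → B) :=
    (Submodule.liftQ _ τ hKle) ∘ₗ eqv.symm.toLinearMap with hσ
  refine Module.Projective.of_split σ π ?_
  apply LinearMap.ext
  intro m
  obtain ⟨g, rfl⟩ := hπ m
  have h1 : eqv (Submodule.Quotient.mk g) = π g := rfl
  have h2 : eqv.symm.toLinearMap (π g) = Submodule.Quotient.mk g := by
    show eqv.symm (π g) = Submodule.Quotient.mk g
    rw [← h1, LinearEquiv.symm_apply_apply]
  rw [LinearMap.comp_apply, LinearMap.id_apply, hσ, LinearMap.comp_apply, h2,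
    Submodule.liftQ_apply, hτ, LinearMap.sub_apply, LinearMap.id_apply, map_sub,
    hρK, sub_zero]
end

section
/- Let S be a commutative ring and p a prime number which is a non-zero divisor on S. Suppose there exists ρ ∈ S and a unit u ∈ S× with ρ^p = u·p, and suppose that for every a ∈ S, if a^p ∈ ρ^p·S then a ∈ ρ·S. Then for every element x of the localization S[1/p], if x^p lies in the image of S in S[1/p], then x itself lies in the image of S. -/
/-- Let `S` be a commutative ring and `p` a prime which is a non-zero divisor on `S`.
Suppose `ρ ∈ S` and a unit `u` satisfy `ρ^p = u·p`, and that `a^p ∈ ρ^p·S` implies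
`a ∈ ρ·S`. Then any `x ∈ S[1/p]` with `x^p` in the image of `S` lies itself in the
image of `S`. -/
theorem mem_range_of_pow_mem_range {S : Type*} [CommRing S] {p : ℕ} (hp : p.Prime)
    (hpnzd : (p : S) ∈ nonZeroDivisors S)
    (ρ : S) (u : Sˣ) (hρ : ρ ^ p = (u : S) * p)
    (hfrob : ∀ a : S, a ^ p ∈ Ideal.span {ρ ^ p} → a ∈ Ideal.span {ρ})
    (x : Localization.Away (p : S))
    (hx : x ^ p ∈ Set.range (algebraMap S (Localization.Away (p : S)))) :
    x ∈ Set.range (algebraMap S (Localization.Away (p : S))) := by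
  set f := algebraMap S (Localization.Away (p : S)) with hf
  -- injectivity of f
  have hinj : Function.Injective f := by
    apply IsLocalization.injective (Localization.Away (p : S))
      (M := Submonoid.powers (p : S))
    rintro y ⟨n, rfl⟩
    exact pow_mem hpnzd n
  -- f ρ is a unit
  have hρunit : IsUnit (f ρ) := by
    rw [← isUnit_pow_iff hp.ne_zero, ← map_pow, hρ, map_mul]
    exact ((u.isUnit.map f)).mul (IsLocalization.Away.algebraMap_isUnit (p : S))
  obtain ⟨t, ht⟩ := hx
  -- key descent claim
  have key : ∀ l : ℕ, ∀ s : S, f ρ ^ l * x = f s →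
      x ∈ Set.range f := by
    intro l
    induction l with
    | zero => intro s hs; exact ⟨s, by simpa using hs.symm⟩
    | succ l ih =>
      intro s hs
      have hsp : f (s ^ p) = f (ρ ^ ((l + 1) * p) * t) := by
        rw [map_pow, ← hs, mul_pow, ← pow_mul, map_mul, map_pow, ht]
      have heq : s ^ p = ρ ^ ((l + 1) * p) * t := hinj hsp
      have hmem : s ^ p ∈ Ideal.span {ρ ^ p} := by
        rw [heq]
        have h2 : (l + 1) * p = p + l * p := by ring
        rw [h2, pow_add, mul_assoc]
        exact Ideal.mem_span_singleton.mpr ⟨ρ ^ (l * p) * t, rfl⟩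
      obtain ⟨s', hs'⟩ := Ideal.mem_span_singleton.mp (hfrob s hmem)
      apply ih s'
      have h3 : f ρ * (f ρ ^ l * x) = f ρ * f s' := by
        rw [← mul_assoc, ← pow_succ', hs, hs', map_mul]
      exact hρunit.mul_left_cancel h3
  -- every element has some l with ρ^l x in the image
  obtain ⟨⟨s, m⟩, hsm⟩ := IsLocalization.surj (Submonoid.powers (p : S)) x
  obtain ⟨n, hn⟩ := m.2
  have hn' : ((p : S)) ^ n = (m : S) := hn
  have h1 : ρ ^ (n * p) = (u : S) ^ n * (m : S) := by
    rw [mul_comm n p, pow_mul, hρ, mul_pow, hn']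
  have h4 : f ρ ^ (n * p) * x = f ((u : S) ^ n * s) := by
    rw [← map_pow, h1, map_mul, map_mul, mul_assoc, mul_comm (f (m : S)) x]
    simp only [hf] at hsm ⊢
    rw [hsm]
  exact key (n * p) _ h4
end

section
/- Let A be a commutative ring, p a prime number which is a non-zero divisor on A, and φ : A → A a ring automorphism. Let x, y, z ∈ A satisfy φ(x) = x^p·(1 + p·y), φ(z) = z^p, and x ≡ z (mod p). Then for every n ≥ 1, x ≡ z · ∏_{i=1}^{n} (1 + p·φ^{−i}(y))^{p^{i−1}} (mod p^{n+1}). -/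
open Finset

lemma pow_p_step_aux {A : Type*} [CommRing A] {p : ℕ} (hp : p.Prime) {a b : A} {k : ℕ}
    (hk : 1 ≤ k) (h : (p : A) ^ k ∣ a - b) : (p : A) ^ (k + 1) ∣ a ^ p - b ^ p := by
  have key : a ^ p - b ^ p = (∑ i ∈ Finset.range p, a ^ i * b ^ (p - 1 - i)) * (a - b) :=
    (geom_sum₂_mul a b p).symm
  rw [key, pow_succ']
  refine mul_dvd_mul ?_ h
  have hpab : (p : A) ∣ a - b := dvd_trans (by simpa using pow_dvd_pow (p : A) hk) h
  have h1 : (p : A) ∣ ∑ i ∈ Finset.range p, (a ^ i * b ^ (p - 1 - i) - b ^ (p - 1)) := by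
    refine Finset.dvd_sum fun i hi => ?_
    have hi' : i ≤ p - 1 := Nat.le_sub_one_of_lt (Finset.mem_range.mp hi)
    have hb : b ^ (p - 1) = b ^ i * b ^ (p - 1 - i) := by
      rw [← pow_add, Nat.add_sub_cancel' hi']
    have : a ^ i * b ^ (p - 1 - i) - b ^ (p - 1) = (a ^ i - b ^ i) * b ^ (p - 1 - i) := by
      rw [hb]; ring
    rw [this]
    exact dvd_mul_of_dvd_left (hpab.trans (sub_dvd_pow_sub_pow a b i)) _
  have h2 : ∑ i ∈ Finset.range p, (a ^ i * b ^ (p - 1 - i) - b ^ (p - 1))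
      = (∑ i ∈ Finset.range p, a ^ i * b ^ (p - 1 - i)) - (p : A) * b ^ (p - 1) := by
    rw [Finset.sum_sub_distrib, Finset.sum_const, Finset.card_range, nsmul_eq_mul]
  have h3 : (∑ i ∈ Finset.range p, a ^ i * b ^ (p - 1 - i))
      = (∑ i ∈ Finset.range p, (a ^ i * b ^ (p - 1 - i) - b ^ (p - 1))) + (p : A) * b ^ (p - 1) := by
    rw [h2]; ring
  rw [h3]
  exact dvd_add h1 (Dvd.dvd.mul_right (dvd_refl _) _)

/-- Let `A` be a commutative ring, `p` a prime which is a non-zero divisor on `A`, and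
`φ` a ring automorphism of `A`. If `φ(x) = x^p·(1 + p·y)`, `φ(z) = z^p` and
`x ≡ z (mod p)`, then for every `n ≥ 1`,
`x ≡ z · ∏_{i=1}^{n} (1 + p·φ^{−i}(y))^{p^{i−1}}  (mod p^{n+1})`. -/
theorem teichmuller_factorization_congruence {A : Type*} [CommRing A] {p : ℕ}
    (hp : p.Prime) (hpnzd : (p : A) ∈ nonZeroDivisors A)
    (φ : A ≃+* A) (x y z : A)
    (hx : φ x = x ^ p * (1 + (p : A) * y))
    (hz : φ z = z ^ p)
    (hxz : x - z ∈ Ideal.span {(p : A)}) :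
    ∀ n : ℕ, 1 ≤ n →
      x - z * ∏ i ∈ Finset.range n, (1 + (p : A) * ((⇑φ.symm)^[i + 1] y)) ^ p ^ i
        ∈ Ideal.span {(p : A) ^ (n + 1)} := by
  have hxz' : (p : A) ∣ x - z := Ideal.mem_span_singleton.mp hxz
  have key : ∀ n : ℕ, (p : A) ^ (n + 1) ∣
      x - z * ∏ i ∈ Finset.range n, (1 + (p : A) * ((⇑φ.symm)^[i + 1] y)) ^ p ^ i := by
    intro n
    induction n with
    | zero => simpa using hxz'
    | succ n ih =>
      set Q := ∏ i ∈ Finset.range n, (1 + (p : A) * ((⇑φ.symm)^[i + 1] y)) ^ p ^ i with hQ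
      have h1 : (p : A) ^ (n + 1) ∣ φ.symm x - φ.symm z * φ.symm Q := by
        have := map_dvd (φ.symm : A →+* A) ih
        simpa using this
      have h2 : (p : A) ^ (n + 2) ∣ (φ.symm x) ^ p - (φ.symm z * φ.symm Q) ^ p :=
        pow_p_step_aux hp (Nat.le_add_left 1 n) h1
      have hxid : (φ.symm x) ^ p * (1 + (p : A) * φ.symm y) = x := by
        have := congrArg φ.symm hx
        simpa [map_mul, map_pow, map_add, map_one, map_natCast] using this.symm
      have hzid : (φ.symm z) ^ p = z := by
        have := congrArg φ.symm hz
        simpa using this.symm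
      have hQid : (φ.symm Q) ^ p
          = ∏ i ∈ Finset.range n, (1 + (p : A) * ((⇑φ.symm)^[i + 1 + 1] y)) ^ p ^ (i + 1) := by
        rw [hQ, map_prod, ← Finset.prod_pow]
        refine Finset.prod_congr rfl fun i _ => ?_
        rw [map_pow, map_add, map_one, map_mul, map_natCast, ← Function.iterate_succ_apply' (⇑φ.symm) (i + 1) y,
          ← pow_mul, ← pow_succ]
      have hprod : ∏ i ∈ Finset.range (n + 1), (1 + (p : A) * ((⇑φ.symm)^[i + 1] y)) ^ p ^ i
          = (1 + (p : A) * φ.symm y) * (φ.symm Q) ^ p := by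
        rw [Finset.prod_range_succ', hQid]
        simp [mul_comm]
      have hfinal : x - z * ∏ i ∈ Finset.range (n + 1),
            (1 + (p : A) * ((⇑φ.symm)^[i + 1] y)) ^ p ^ i
          = ((φ.symm x) ^ p - (φ.symm z * φ.symm Q) ^ p) * (1 + (p : A) * φ.symm y) := by
        rw [hprod]
        linear_combination (-1 : A) * hxid
          + (1 + (p : A) * φ.symm y) * (φ.symm Q) ^ p * hzid
      rw [hfinal]
      exact h2.mul_right _
  intro n _
  exact Ideal.mem_span_singleton.mpr (key n)
end

section
/- Let F be a complete nonarchimedean normed field and a ∈ F with 0 < ‖a‖ < 1. Let b : ℕ → F be a sequence with b_n → 0. Define x : ℕ → F recursively by x₀ = 0 and x_{n+1} = a·(−b_n − n·x_n). Then x_n → 0, and moreover −n·x_n − a^{−1}·x_{n+1} = b_n for all n. -/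
open Filter

private lemma norm_nat_le_one' {F : Type*} [NormedField F]
    (hna : IsNonarchimedean (norm : F → ℝ)) (n : ℕ) : ‖(n : F)‖ ≤ 1 := by
  induction n with
  | zero => simp
  | succ k ih =>
    push_cast
    calc ‖(k : F) + 1‖ ≤ max ‖(k : F)‖ ‖(1 : F)‖ := hna _ _
      _ ≤ 1 := by simp [ih]

/-- Let `F` be a complete nonarchimedean normed field and `a ∈ F` with `0 < ‖a‖ < 1`.
Let `b : ℕ → F` be a null sequence and define `x` recursively by `x 0 = 0` and
`x (n+1) = a·(−b n − n·x n)`. Then `x n → 0` and `−n·x n − a⁻¹·x (n+1) = b n` for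
all `n`. -/
theorem recursive_solution_tendsto_zero {F : Type*} [NormedField F] [CompleteSpace F]
    (hna : IsNonarchimedean (norm : F → ℝ))
    (a : F) (ha0 : 0 < ‖a‖) (ha1 : ‖a‖ < 1)
    (b : ℕ → F) (hb : Tendsto b atTop (nhds 0))
    (x : ℕ → F) (hx0 : x 0 = 0)
    (hxrec : ∀ n : ℕ, x (n + 1) = a * (-b n - (n : F) * x n)) :
    Tendsto x atTop (nhds 0) ∧
      ∀ n : ℕ, -(n : F) * x n - a⁻¹ * x (n + 1) = b n := by
  have ha : a ≠ 0 := by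
    intro h; rw [h] at ha0; simp at ha0
  constructor
  · rw [NormedAddCommGroup.tendsto_nhds_zero]
    intro ε hε
    have hε2 : (0 : ℝ) < ε / 2 := by linarith
    rw [NormedAddCommGroup.tendsto_nhds_zero] at hb
    obtain ⟨N, hN⟩ := (hb (ε/2) hε2).exists_forall_of_atTop
    -- key inductive bound
    have key : ∀ k : ℕ, ‖x (N + k)‖ ≤ max (ε/2) (‖a‖ ^ k * ‖x N‖) := by
      intro k
      induction k with
      | zero => simp
      | succ m ih =>
        have hrec := hxrec (N + m)
        have hb' : ‖b (N + m)‖ ≤ ε / 2 := le_of_lt (hN _ (Nat.le_add_right _ _))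
        have hnx : ‖(↑(N + m) : F) * x (N + m)‖ ≤ ‖x (N + m)‖ := by
          rw [norm_mul]
          calc ‖(↑(N + m) : F)‖ * ‖x (N + m)‖ ≤ 1 * ‖x (N + m)‖ :=
            mul_le_mul_of_nonneg_right (norm_nat_le_one' hna _) (norm_nonneg _)
          _ = ‖x (N + m)‖ := one_mul _
        have h1 : ‖x (N + (m + 1))‖ ≤ ‖a‖ * max (ε/2) ‖x (N + m)‖ := by
          have : N + (m + 1) = (N + m) + 1 := by ring
          rw [this, hrec, norm_mul]
          apply mul_le_mul_of_nonneg_left _ (norm_nonneg a)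
          calc ‖-b (N + m) - ↑(N + m) * x (N + m)‖
              ≤ max ‖-b (N + m)‖ ‖↑(N + m) * x (N + m)‖ := by
                rw [sub_eq_add_neg]
                have := hna (-b (N + m)) (-(↑(N + m) * x (N + m)))
                rwa [norm_neg (↑(N + m) * x (N + m))] at this
            _ ≤ max (ε/2) ‖x (N + m)‖ := by
                apply max_le_max
                · rw [norm_neg]; exact hb'
                · exact hnx
        refine h1.trans ?_
        have h2 : max (ε/2) ‖x (N + m)‖ ≤ max (ε/2) (‖a‖ ^ m * ‖x N‖) := by
          rcases max_cases (ε/2) ‖x (N + m)‖ with ⟨he, _⟩ | ⟨he, _⟩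
          · rw [he]; exact le_max_left _ _
          · rw [he]; exact ih
        calc ‖a‖ * max (ε/2) ‖x (N + m)‖ ≤ ‖a‖ * max (ε/2) (‖a‖ ^ m * ‖x N‖) :=
              mul_le_mul_of_nonneg_left h2 (norm_nonneg a)
          _ ≤ max (ε/2) (‖a‖ ^ (m+1) * ‖x N‖) := by
              rw [mul_max_of_nonneg _ _ (norm_nonneg a)]
              apply max_le_max
              · nlinarith
              · rw [pow_succ]; ring_nf; exact le_refl _
    -- tail estimate
    have hpow : Tendsto (fun k : ℕ => ‖a‖ ^ k * ‖x N‖) atTop (nhds 0) := by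
      simpa using (tendsto_pow_atTop_nhds_zero_of_lt_one (norm_nonneg a) ha1).mul_const ‖x N‖
    rw [NormedAddCommGroup.tendsto_nhds_zero] at hpow
    obtain ⟨K, hK⟩ := (hpow (ε/2) hε2).exists_forall_of_atTop
    rw [eventually_atTop]
    refine ⟨N + K, fun n hn => ?_⟩
    obtain ⟨k, rfl⟩ := Nat.exists_eq_add_of_le (le_trans (Nat.le_add_right N K) hn)
    have hk : K ≤ k := by omega
    have := key k
    have h3 : ‖a‖ ^ k * ‖x N‖ < ε / 2 := by
      have := hK k hk
      rwa [Real.norm_eq_abs, abs_of_nonneg (by positivity)] at this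
    calc ‖x (N + k)‖ ≤ max (ε/2) (‖a‖ ^ k * ‖x N‖) := this
      _ < ε := max_lt (by linarith) (by linarith)
  · intro n
    rw [hxrec n]
    field_simp
    ring
end

section
/- Let R be a commutative ℚ-algebra, M an R-module, and γ : M → M an R-linear automorphism such that γ − id is nilpotent (i.e. (γ − id)^k = 0 for some k). Extend γ to an R[W]-semilinear automorphism γ̃ of M[W] := M ⊗_R R[W] by γ̃(m ⊗ f(W)) = γ(m) ⊗ f(W+1). Then the evaluation map W ↦ 0, M[W] → M, restricts to an R-module isomorphism from the fixed points {x ∈ M[W] : γ̃(x) = x} onto M; its inverse sends v ∈ M to Σ_{n≥0} binom(W, n)·(γ^{−1} − 1)ⁿ(v), where binom(W,n) = W(W−1)⋯(W−n+1)/n! ∈ ℚ[W] (a finite sum by nilpotence). -/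
noncomputable section

open Polynomial

private lemma eval_nat_all_zero {R : Type*} [CommRing R] [Algebra ℚ R]
    {M : Type*} [AddCommGroup M] [Module R M]
    (f : PolynomialModule R M) (h : ∀ n : ℕ, PolynomialModule.eval (n : R) f = 0) :
    f = 0 := by
  classical
  set d := (f.coeff.support.sup id) + 1 with hd
  have hsub : f.coeff.support ⊆ Finset.range d := by
    intro i hi
    simp only [Finset.mem_range, hd]
    exact Nat.lt_succ_of_le (Finset.le_sup (f := id) hi)
  have hf : ∀ r : R, PolynomialModule.eval r f = ∑ i : Fin d, r ^ (i : ℕ) • f.coeff i := by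
    intro r
    have h1 : PolynomialModule.eval r f = ∑ i ∈ f.coeff.support, r ^ i • f.coeff i := rfl
    rw [h1, ← Finset.sum_range (fun i => r ^ i • f.coeff i)]
    exact Finset.sum_subset hsub fun i _ hi => by
      rw [Finsupp.notMem_support_iff.mp hi, smul_zero]
  set V : Matrix (Fin d) (Fin d) R := Matrix.vandermonde (fun j => ((j : ℕ) : R)) with hV
  have hrow : ∀ j : Fin d, ∑ i : Fin d, V j i • f.coeff (i : ℕ) = 0 := by
    intro j
    have := h j
    rw [hf] at this
    simpa [hV, Matrix.vandermonde] using this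
  have hdet : IsUnit V.det := by
    rw [hV, Matrix.det_vandermonde]
    apply Finset.prod_induction _ IsUnit (fun a b => IsUnit.mul) isUnit_one
    intro i _
    apply Finset.prod_induction _ IsUnit (fun a b => IsUnit.mul) isUnit_one
    intro j hj
    have hij' : i < j := Finset.mem_Ioi.mp hj
    have hij : (i : ℕ) < (j : ℕ) := hij'
    have heq : ((j : ℕ) : R) - ((i : ℕ) : R) = algebraMap ℚ R (((j : ℕ) : ℚ) - ((i : ℕ) : ℚ)) := by
      push_cast; ring
    rw [heq]
    apply IsUnit.map
    apply isUnit_iff_ne_zero.mpr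
    have hlt : ((i : ℕ) : ℚ) < ((j : ℕ) : ℚ) := by exact_mod_cast hij
    intro hzero
    rw [sub_eq_zero] at hzero
    exact absurd hzero (ne_of_gt hlt)
  have hcoef : ∀ kk : Fin d, f.coeff (kk : ℕ) = 0 := by
    intro kk
    have hsum : ∑ j : Fin d, V.adjugate kk j • (∑ i : Fin d, V j i • f.coeff (i : ℕ)) = 0 := by
      simp [hrow]
    have hkey : V.det • f.coeff (kk : ℕ) = 0 := by
      have h2 : V.det • f.coeff (kk : ℕ) = ∑ i : Fin d, ((V.adjugate * V) kk i) • f.coeff (i : ℕ) := by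
        rw [Matrix.adjugate_mul]
        simp [Matrix.smul_apply, Matrix.one_apply, ite_smul, mul_smul, Finset.sum_ite_eq,
          smul_smul]
      rw [h2]
      rw [← hsum]
      simp only [Matrix.mul_apply, Finset.sum_smul, smul_smul, Finset.smul_sum]
      exact Finset.sum_comm
    obtain ⟨u, hu⟩ := hdet
    have : ((u : R) • f.coeff (kk : ℕ)) = 0 := by rw [hu]; exact hkey
    have := congrArg (fun m => (↑u⁻¹ : R) • m) this
    simpa [smul_smul] using this
  apply PolynomialModule.ext
  rw [PolynomialModule.coeff_zero]
  apply DFunLike.ext _ 0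
  intro j
  rw [Finsupp.zero_apply]
  by_cases hj : j < d
  · exact hcoef ⟨j, hj⟩
  · by_contra hne
    exact hj (Finset.mem_range.mp (hsub (Finsupp.mem_support_iff.mpr hne)))

private lemma binom_comp_succ {R : Type*} [CommRing R] [Algebra ℚ R] (n : ℕ) :
    ((((n+1).factorial : ℚ)⁻¹ •
        ∏ i ∈ Finset.range (n+1), (Polynomial.X - Polynomial.C (i : R))).comp
      (Polynomial.X + 1))
    = ((n+1).factorial : ℚ)⁻¹ • ∏ i ∈ Finset.range (n+1), (Polynomial.X - Polynomial.C (i : R))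
      + (n.factorial : ℚ)⁻¹ • ∏ i ∈ Finset.range n, (Polynomial.X - Polynomial.C (i : R)) := by
  set P : Polynomial R := ∏ i ∈ Finset.range n, (Polynomial.X - Polynomial.C (i : R)) with hPdef
  have hP : (∏ i ∈ Finset.range (n+1), (X - C (i : R))).comp (X + 1) = P * (X + 1) := by
    rw [Polynomial.prod_comp, Finset.prod_range_succ']
    congr 1
    · rw [hPdef]
      apply Finset.prod_congr rfl
      intro i _
      rw [Polynomial.sub_comp, Polynomial.X_comp, Polynomial.C_comp]
      push_cast
      rw [map_add, Polynomial.C_1]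
      ring
    · rw [Polynomial.sub_comp, Polynomial.X_comp, Polynomial.C_comp]
      simp
  rw [Polynomial.smul_comp, hP, Finset.prod_range_succ, ← hPdef]
  have hfac : (n.factorial : ℚ)⁻¹ • P
      = ((n+1).factorial : ℚ)⁻¹ • ((C ((n : R) + 1)) * P) := by
    have h1 : (C ((n : R) + 1)) * P = (((n : ℚ) + 1)) • P := by
      rw [Algebra.smul_def]
      congr 1
      rw [Polynomial.algebraMap_apply]
      congr 1
      push_cast
      ring
    rw [h1, smul_smul]
    congr 1
    have h2 : ((n+1).factorial : ℚ) = ((n : ℚ) + 1) * (n.factorial : ℚ) := by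
      push_cast [Nat.factorial_succ]
      ring
    rw [h2]
    have h3 : ((n : ℚ) + 1) ≠ 0 := by positivity
    have h4 : (n.factorial : ℚ) ≠ 0 := Nat.cast_ne_zero.mpr (Nat.factorial_ne_zero n)
    field_simp
  rw [hfac, ← smul_add]
  congr 1
  rw [map_add, Polynomial.C_1]
  ring

/-- Let `R` be a commutative `ℚ`-algebra, `M` an `R`-module, and `γ` an `R`-linear
automorphism of `M` with `γ − id` nilpotent. Extend `γ` to the semilinear
automorphism `γ̃` of `M[W]` (the polynomial module) with `γ̃(m·Wⁿ) = γ(m)·(W+1)ⁿ`.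
Then evaluation at `W = 0` restricts to an `R`-module isomorphism from the fixed
points `{x ∈ M[W] : γ̃ x = x}` onto `M`, whose inverse sends `v` to the (finite, by
nilpotence) sum `Σ_{n≥0} binom(W,n) • (γ⁻¹ − 1)ⁿ(v)` where
`binom(W,n) = W(W−1)⋯(W−n+1)/n! ∈ ℚ[W] ⊆ R[W]`. -/
theorem unipotent_decompletion {R : Type*} [CommRing R] [Algebra ℚ R]
    {M : Type*} [AddCommGroup M] [Module R M]
    (γ : M ≃ₗ[R] M)
    (hnil : IsNilpotent ((γ : M →ₗ[R] M) - LinearMap.id)) :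
    -- the twisted extension `γ̃` of `γ` to `M[W]`, acting by `W ↦ W + 1` on `W`
    let γt : PolynomialModule R M →ₗ[R] PolynomialModule R M :=
      (PolynomialModule.comp (Polynomial.X + 1)).comp
        (PolynomialModule.map R (γ : M →ₗ[R] M))
    -- the binomial polynomial `binom(W, n) = W(W−1)⋯(W−n+1)/n!`
    let binomW : ℕ → Polynomial R := fun n =>
      (n.factorial : ℚ)⁻¹ • ∏ i ∈ Finset.range n, (Polynomial.X - Polynomial.C (i : R))
    -- the candidate inverse `v ↦ Σ_{n < k} binom(W,n) • (γ⁻¹ − 1)ⁿ(v)`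
    let s : ℕ → M → PolynomialModule R M := fun k v =>
      ∑ n ∈ Finset.range k,
        binomW n • PolynomialModule.single R 0
          ((((γ.symm : M →ₗ[R] M) - LinearMap.id : M →ₗ[R] M) ^ n) v)
    -- evaluation at `W = 0` is a bijection from the fixed points of `γ̃` onto `M` …
    Function.Bijective
      (fun x : LinearMap.ker (γt - LinearMap.id) => PolynomialModule.eval (0 : R) x.1) ∧
    -- … whose inverse is given by the finite sum `s k v` (for any `k` past the
    -- nilpotence degree of `γ⁻¹ − 1`): `s k v` is a fixed point evaluating to `v`
    ∀ (v : M) (k : ℕ), ((γ.symm : M →ₗ[R] M) - LinearMap.id) ^ k = 0 →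
      γt (s k v) = s k v ∧ PolynomialModule.eval (0 : R) (s k v) = v := by
  intro γt binomW s
  classical
  set δ : M →ₗ[R] M := (γ.symm : M →ₗ[R] M) - LinearMap.id with hδ
  -- γ applied to δ m
  have hγδ : ∀ m : M, γ (δ m) = m - γ m := by
    intro m
    simp [hδ, map_sub, LinearMap.sub_apply]
  -- action of γt on p • single 0 m
  have hγt : ∀ (p : Polynomial R) (m : M),
      γt (p • PolynomialModule.single R 0 m)
        = (p.comp (Polynomial.X + 1)) • PolynomialModule.single R 0 (γ m) := by
    intro p m
    have hid : p.map (algebraMap R R) = p := by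
      rw [Algebra.algebraMap_self, Polynomial.map_id]
    show PolynomialModule.comp (Polynomial.X + 1)
        (PolynomialModule.map R (γ : M →ₗ[R] M) (p • PolynomialModule.single R 0 m)) = _
    rw [PolynomialModule.map_smul, hid, PolynomialModule.map_single,
      PolynomialModule.comp_smul, PolynomialModule.comp_single, pow_zero, one_smul]
    rfl
  -- evaluation of p • single 0 m at 0
  have heval0 : ∀ (p : Polynomial R) (m : M),
      PolynomialModule.eval (0 : R) (p • PolynomialModule.single R 0 m) = p.eval 0 • m := by
    intro p m
    rw [PolynomialModule.eval_smul, PolynomialModule.eval_single, pow_zero, one_smul]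
  -- binomW facts
  have hb0 : binomW 0 = 1 := by
    simp [binomW]
  have hbcomp : ∀ n : ℕ, (binomW (n+1)).comp (Polynomial.X + 1) = binomW (n+1) + binomW n :=
    fun n => binom_comp_succ n
  have hbeval : ∀ n : ℕ, (binomW (n+1)).eval 0 = 0 := by
    intro n
    simp only [binomW]
    rw [Polynomial.eval_smul, Polynomial.eval_prod,
      Finset.prod_eq_zero (Finset.mem_range.mpr (Nat.succ_pos n)) (by simp), smul_zero]
  -- part 2
  have key : ∀ (v : M) (k : ℕ), δ ^ k = 0 →
      γt (s k v) = s k v ∧ PolynomialModule.eval (0 : R) (s k v) = v := by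
    intro v k hk
    rcases Nat.eq_zero_or_pos k with rfl | hkpos
    · have hv : v = 0 := by
        have h1 : (δ ^ 0) v = 0 := by rw [hk]; rfl
        simpa using h1
      refine ⟨?_, ?_⟩
      · show γt (s 0 v) = s 0 v
        simp [s]
      · simp [s, hv]
    · obtain ⟨k', rfl⟩ := Nat.exists_eq_succ_of_ne_zero (Nat.pos_iff_ne_zero.mp hkpos)
      have hwlast : (δ ^ (k' + 1)) v = 0 := by rw [hk]; rfl
      have hsplit : ∀ n : ℕ, (δ ^ n) v = γ ((δ ^ n) v) + γ ((δ ^ (n+1)) v) := by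
        intro n
        have h1 : (δ ^ (n+1)) v = δ ((δ ^ n) v) := by
          rw [pow_succ']; rfl
        rw [h1, hγδ ((δ ^ n) v)]
        abel
      constructor
      · -- fixedness
        have hLHS : γt (s (k'+1) v) = ∑ n ∈ Finset.range (k'+1),
            ((binomW n).comp (Polynomial.X + 1)) •
              PolynomialModule.single R 0 (γ ((δ ^ n) v)) := by
          show γt (∑ n ∈ Finset.range (k'+1),
            binomW n • PolynomialModule.single R 0 ((δ ^ n) v)) = _
          rw [map_sum]
          exact Finset.sum_congr rfl fun n _ => hγt _ _
        have hRHS : s (k'+1) v = (∑ n ∈ Finset.range k',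
              binomW (n+1) • PolynomialModule.single R 0 (γ ((δ ^ (n+1)) v))
              + binomW 0 • PolynomialModule.single R 0 (γ ((δ ^ 0) v)))
            + ∑ n ∈ Finset.range (k'+1),
              binomW n • PolynomialModule.single R 0 (γ ((δ ^ (n+1)) v)) := by
          show (∑ n ∈ Finset.range (k'+1),
            binomW n • PolynomialModule.single R 0 ((δ ^ n) v)) = _
          have h2 : ∀ n : ℕ, binomW n • PolynomialModule.single R 0 ((δ ^ n) v)
              = binomW n • PolynomialModule.single R 0 (γ ((δ ^ n) v))
                + binomW n • PolynomialModule.single R 0 (γ ((δ ^ (n+1)) v)) := by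
            intro n
            rw [← smul_add, ← PolynomialModule.single_add, ← hsplit n]
          rw [Finset.sum_congr rfl fun n _ => h2 n, Finset.sum_add_distrib,
            Finset.sum_range_succ']
        rw [hLHS, hRHS, Finset.sum_range_succ']
        rw [Finset.sum_congr rfl (fun n _ => by rw [hbcomp n, add_smul]),
          Finset.sum_add_distrib, hb0, Polynomial.one_comp, ← hb0]
        rw [Finset.sum_range_succ (fun n => binomW n •
          PolynomialModule.single R 0 (γ ((δ ^ (n+1)) v))) k']
        rw [hwlast]
        simp only [map_zero, PolynomialModule.single_zero, smul_zero, add_zero]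
        abel
      · -- evaluation at 0
        show PolynomialModule.eval (0 : R) (∑ n ∈ Finset.range (k'+1),
          binomW n • PolynomialModule.single R 0 ((δ ^ n) v)) = v
        rw [map_sum]
        rw [Finset.sum_congr rfl fun n _ => heval0 (binomW n) ((δ ^ n) v)]
        rw [Finset.sum_eq_single_of_mem 0 (Finset.mem_range.mpr (Nat.succ_pos k'))]
        · simp [hb0]
        · intro n _ hn
          obtain ⟨m, rfl⟩ := Nat.exists_eq_succ_of_ne_zero hn
          rw [hbeval m, zero_smul]
  -- nilpotence of δ
  have hδnil : IsNilpotent δ := by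
    have hc : Commute ((γ.symm : M →ₗ[R] M)) ((γ : M →ₗ[R] M) - LinearMap.id) := by
      have h1 : (γ.symm : M →ₗ[R] M) * (γ : M →ₗ[R] M) = 1 := by
        ext m; simp [Module.End.mul_apply]
      have h2 : (γ : M →ₗ[R] M) * (γ.symm : M →ₗ[R] M) = 1 := by
        ext m; simp [Module.End.mul_apply]
      apply Commute.sub_right
      · show _ * _ = _ * _
        rw [h1, h2]
      · exact Commute.one_right _
    have h3 : δ = -((γ.symm : M →ₗ[R] M) * ((γ : M →ₗ[R] M) - LinearMap.id)) := by
      ext m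
      simp [hδ, Module.End.mul_apply, LinearMap.sub_apply, map_sub]
    rw [h3]
    exact (hc.isNilpotent_mul_left hnil).neg
  obtain ⟨k, hδk⟩ := hδnil
  -- uniqueness: fixed point evaluating to zero is zero
  have huniq : ∀ z : PolynomialModule R M, γt z = z →
      PolynomialModule.eval (0 : R) z = 0 → z = 0 := by
    intro z hz h0
    apply eval_nat_all_zero z
    intro n
    induction n with
    | zero => simpa using h0
    | succ n ih =>
      have hstep : PolynomialModule.eval ((n : ℕ) : R) z
          = γ (PolynomialModule.eval (((n : ℕ) : R) + 1) z) := by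
        conv_lhs => rw [← hz]
        show PolynomialModule.eval ((n : ℕ) : R)
          (PolynomialModule.comp (Polynomial.X + 1)
            (PolynomialModule.map R (γ : M →ₗ[R] M) z)) = _
        rw [PolynomialModule.comp_eval]
        rw [PolynomialModule.eval_map']
        norm_num
      have h1 : γ (PolynomialModule.eval (((n : ℕ) : R) + 1) z) = 0 := by
        rw [← hstep, ih]
      have h2 : PolynomialModule.eval (((n : ℕ) : R) + 1) z = 0 := by
        have := congrArg γ.symm h1
        simpa using this
      rw [Nat.cast_succ]
      exact h2
  constructor
  · constructor
    · -- injective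
      intro x y hxy
      apply Subtype.ext
      have hmem : ∀ w : LinearMap.ker (γt - LinearMap.id), γt w.1 = w.1 := by
        intro w
        have := w.2
        rw [LinearMap.mem_ker, LinearMap.sub_apply, LinearMap.id_apply, sub_eq_zero] at this
        exact this
      have hz : γt (x.1 - y.1) = x.1 - y.1 := by
        rw [map_sub, hmem x, hmem y]
      have h0 : PolynomialModule.eval (0 : R) (x.1 - y.1) = 0 := by
        rw [map_sub, sub_eq_zero]
        exact hxy
      have := huniq _ hz h0
      rwa [sub_eq_zero] at this
    · -- surjective
      intro v
      obtain ⟨hfix, hev⟩ := key v k hδk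
      refine ⟨⟨s k v, ?_⟩, hev⟩
      rw [LinearMap.mem_ker, LinearMap.sub_apply, LinearMap.id_apply, sub_eq_zero]
      exact hfix
  · exact key


end
end
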